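/- arXiv:2005.11942 — 2 statements merged into one kernel-verified Lean document; each statement's English description precedes it below -/
import Mathlib

section
/- For every α, d > 0 there exist ρ > 0 and n₀ such that every (ρ,d)-dense graph G on n ≥ n₀ vertices with minimum degree at least α·n contains a Hamilton cycle. -/
open Finset

/- `E` is the edge set of a 3-uniform hypergraph: every edge is a 3-element vertex set. -/
def ThreeUniform {V : Type*} (E : Finset (Finset V)) : Prop :=
  ∀ e ∈ E, e.card = 3

variable {n : ℕ}

/- Number of pairs `(x,(y,z)) ∈ X × P` with `{x,y,z} ∈ E`. -/
open Classical in
noncomputable def eXP (E : Finset (Finset (Fin n))) (X : Finset (Fin n))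
    (P : Finset (Fin n × Fin n)) : ℕ :=
  ((X ×ˢ P).filter (fun q => ({q.1, q.2.1, q.2.2} : Finset (Fin n)) ∈ E)).card

/- `H = (Fin n, E)` is `(ρ, d, ev)`-dense. -/
def EvDense (E : Finset (Finset (Fin n))) (ρ d : ℝ) : Prop :=
  ∀ (X : Finset (Fin n)) (P : Finset (Fin n × Fin n)),
    d * X.card * P.card - ρ * (n : ℝ) ^ 3 ≤ (eXP E X P : ℝ)

/- `H = (Fin n, E)` is `(ρ, d, ev)`-dense over `(X, P)`. -/
def EvDenseOver (E : Finset (Finset (Fin n))) (ρ d : ℝ) (X : Finset (Fin n))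
    (P : Finset (Fin n × Fin n)) : Prop :=
  ∀ X' ⊆ X, ∀ P' ⊆ P,
    d * X'.card * P'.card - ρ * X.card * P.card ≤ (eXP E X' P' : ℝ)

/- The set `K(P,Q)` of pairs of ordered pairs overlapping in the middle coordinate. -/
open Classical in
noncomputable def Kmid (P Q : Finset (Fin n × Fin n)) :
    Finset ((Fin n × Fin n) × Fin n × Fin n) :=
  (P ×ˢ Q).filter (fun pq => pq.1.2 = pq.2.1)

/- Number of pairs `((x,y),(y,z)) ∈ P × Q` with `{x,y,z} ∈ E`. -/
open Classical in
noncomputable def ePQ (E : Finset (Finset (Fin n))) (P Q : Finset (Fin n × Fin n)) : ℕ :=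
  ((P ×ˢ Q).filter (fun pq =>
    pq.1.2 = pq.2.1 ∧ ({pq.1.1, pq.1.2, pq.2.2} : Finset (Fin n)) ∈ E)).card

/- `H = (Fin n, E)` is `(ρ, d, ee)`-dense. -/
def EeDense (E : Finset (Finset (Fin n))) (ρ d : ℝ) : Prop :=
  ∀ P Q : Finset (Fin n × Fin n),
    d * ((Kmid P Q).card : ℝ) - ρ * (n : ℝ) ^ 3 ≤ (ePQ E P Q : ℝ)

/- Number of triples `(x,y,z) ∈ X × Y × Z` with `{x,y,z} ∈ E`. -/
open Classical in
noncomputable def eXYZ (E : Finset (Finset (Fin n))) (X Y Z : Finset (Fin n)) : ℕ :=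
  ((X ×ˢ Y ×ˢ Z).filter (fun t => ({t.1, t.2.1, t.2.2} : Finset (Fin n)) ∈ E)).card

/- `H = (Fin n, E)` is `(ρ, d, vvv)`-dense. -/
def VvvDense (E : Finset (Finset (Fin n))) (ρ d : ℝ) : Prop :=
  ∀ X Y Z : Finset (Fin n),
    d * X.card * Y.card * Z.card - ρ * (n : ℝ) ^ 3 ≤ (eXYZ E X Y Z : ℝ)

/- The (vertex) degree of `v`: the number of edges containing `v`, i.e. the number of
pairs `{y,z}` with `{v,y,z} ∈ E`. -/
noncomputable def hdeg (E : Finset (Finset (Fin n))) (v : Fin n) : ℕ :=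
  (E.filter (fun e => v ∈ e)).card

/- The codegree of `u` and `v`: the number of vertices `w` with `{u,v,w} ∈ E`. -/
open Classical in
noncomputable def codeg (E : Finset (Finset (Fin n))) (u v : Fin n) : ℕ :=
  (univ.filter (fun w => ({u, v, w} : Finset (Fin n)) ∈ E)).card

/- A tight Hamilton cycle: a cyclic ordering of all vertices in which every three
cyclically consecutive vertices form an edge. -/
def HasTightHamiltonCycle (E : Finset (Finset (Fin n))) : Prop :=
  ∃ f : ZMod n → Fin n, Function.Bijective f ∧
    ∀ i : ZMod n, ({f i, f (i + 1), f (i + 2)} : Finset (Fin n)) ∈ E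

/- The list `l` of vertices is a tight path: its entries are distinct and every three
consecutive entries form an edge. -/
def TightPath (E : Finset (Finset (Fin n))) (l : List (Fin n)) : Prop :=
  l.Nodup ∧ ∀ (i : ℕ) (h : i + 2 < l.length),
    ({l[i]'(by omega), l[i+1]'(by omega), l[i+2]'h} : Finset (Fin n)) ∈ E

/- The set `Z_{xy}` of vertices `z` with `xyz ∈ E` and `d(y,z) ≥ β n`. -/
open Classical in
noncomputable def connSet (E : Finset (Finset (Fin n))) (β : ℝ) (x y : Fin n) :
    Finset (Fin n) :=
  univ.filter (fun z => ({x, y, z} : Finset (Fin n)) ∈ E ∧ β * n ≤ (codeg E y z : ℝ))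

/- The ordered pair `(x,y)` is `β`-connectable. -/
def Connectable (E : Finset (Finset (Fin n))) (β : ℝ) (x y : Fin n) : Prop :=
  β * n ≤ ((connSet E β x y).card : ℝ)

/- A tight `(a,b)`-`(c,d)`-path is `β`-connectable if `(b,a)` and `(c,d)` are
`β`-connectable. -/
def ConnectablePath (E : Finset (Finset (Fin n))) (β : ℝ) (l : List (Fin n)) : Prop :=
  ∃ h : 2 ≤ l.length,
    Connectable E β (l[1]'(by omega)) (l[0]'(by omega)) ∧
    Connectable E β (l[l.length - 2]'(by omega)) (l[l.length - 1]'(by omega))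

/- The number of tight `(x,y)`-`(z,w)`-paths with `ℓ` inner vertices. -/
open Classical in
noncomputable def connCount (E : Finset (Finset (Fin n))) (x y z w : Fin n) (ℓ : ℕ) : ℕ :=
  (univ.filter (fun t : Fin ℓ → Fin n =>
    TightPath E ([x, y] ++ List.ofFn t ++ [z, w]))).card
-- extra defs
/- A bipartite graph between `V₁` and `V₂` (inside an ambient graph `G`) is `(η,d)`-regular. -/
open Classical in
def RegularPair (G : SimpleGraph (Fin n)) (V₁ V₂ : Finset (Fin n)) (η d : ℝ) : Prop :=
  ∀ X ⊆ V₁, ∀ Y ⊆ V₂,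
    |(((X ×ˢ Y).filter (fun p => G.Adj p.1 p.2)).card : ℝ) - d * X.card * Y.card|
      ≤ η * V₁.card * V₂.card

/- A graph is `(ρ,d)`-dense. -/
open Classical in
def GraphDense (G : SimpleGraph (Fin n)) (ρ d : ℝ) : Prop :=
  ∀ X Y : Finset (Fin n),
    d * X.card * Y.card - ρ * (n : ℝ) ^ 2 ≤
      (((X ×ˢ Y).filter (fun p => G.Adj p.1 p.2)).card : ℝ)

/- The bipartite graph with (ordered) edge set `P ⊆ V₁ × V₂` is `(η,ξ)`-regular. -/
open Classical in
def RegBip {N : ℕ} (P : Finset (Fin N × Fin N)) (V₁ V₂ : Finset (Fin N)) (η ξ : ℝ) : Prop :=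
  ∀ X ⊆ V₁, ∀ Y ⊆ V₂,
    |((P.filter (fun p => p.1 ∈ X ∧ p.2 ∈ Y)).card : ℝ) - ξ * X.card * Y.card|
      ≤ η * V₁.card * V₂.card

/- The shadow `∂H[A,B]`: ordered pairs `(a,b) ∈ A × B` contained in a common edge. -/
open Classical in
noncomputable def shadowPairs (E : Finset (Finset (Fin n))) (A B : Finset (Fin n)) :
    Finset (Fin n × Fin n) :=
  (A ×ˢ B).filter (fun p => ∃ e ∈ E, p.1 ∈ e ∧ p.2 ∈ e)

/- The restricted neighbourhood `N(v,P)`. -/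
open Classical in
noncomputable def Nres (E : Finset (Finset (Fin n))) (v : Fin n)
    (P : Finset (Fin n × Fin n)) : Finset (Fin n × Fin n) :=
  P.filter (fun p => ({v, p.1, p.2} : Finset (Fin n)) ∈ E)

/- The number of `(P,Q)`-cherries, counted as ordered tuples `(x,y,z,w)` with
`{x,y} ∈ P`, `{z,w} ∈ Q` disjoint and `xyz, yzw ∈ E`. -/
open Classical in
noncomputable def cherryCount (E : Finset (Finset (Fin n)))
    (P Q : Finset (Finset (Fin n))) : ℕ :=
  (univ.filter (fun t : Fin n × Fin n × Fin n × Fin n =>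
    ({t.1, t.2.1} : Finset (Fin n)) ∈ P ∧
    ({t.2.2.1, t.2.2.2} : Finset (Fin n)) ∈ Q ∧
    Disjoint ({t.1, t.2.1} : Finset (Fin n)) ({t.2.2.1, t.2.2.2} : Finset (Fin n)) ∧
    ({t.1, t.2.1, t.2.2.1} : Finset (Fin n)) ∈ E ∧
    ({t.2.1, t.2.2.1, t.2.2.2} : Finset (Fin n)) ∈ E)).card

/- The number of tight paths on `ℓ+2` vertices starting with an ordered pair from `P`
and whose last two vertices form a pair from `Q`. -/
open Classical in
noncomputable def pathCountPQ (E : Finset (Finset (Fin n))) (P : Finset (Fin n × Fin n))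
    (Q : Finset (Finset (Fin n))) (ℓ : ℕ) : ℕ :=
  (univ.filter (fun t : Fin (ℓ + 2) → Fin n =>
    TightPath E (List.ofFn t) ∧ (t 0, t 1) ∈ P ∧
    ({t ⟨ℓ, by omega⟩, t ⟨ℓ + 1, by omega⟩} : Finset (Fin n)) ∈ Q)).card

/- Two disjoint unordered pairs `q`, `q'` are `(θ,L)`-turnable. -/
def Turnable (E : Finset (Finset (Fin n))) (θ : ℝ) (L : ℕ) (q q' : Finset (Fin n)) : Prop :=
  Disjoint q q' ∧ ∀ q₁ q₂ q₁' q₂' : Fin n, q = {q₁, q₂} → q' = {q₁', q₂'} →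
    ∃ ℓ : ℕ, 1 ≤ ℓ ∧ ℓ ≤ L ∧ θ * (n : ℝ) ^ ℓ ≤ (connCount E q₁ q₂ q₁' q₂' ℓ : ℝ)

/- `t` is an absorber for the triple `(v₁,v₂,v₃)`; here
`(x₁,x₂,x₃,y₁,y₂,y₃,z₁,z₂,z₃) = (t 0,…,t 8)` and `Pᵢ = (aᵢ,bᵢ,cᵢ,dᵢ)` are
`(t 9,…,t 12)`, `(t 13,…,t 16)`, `(t 17,…,t 20)`. -/
def IsAbsorber (E : Finset (Finset (Fin n))) (v₁ v₂ v₃ : Fin n) (t : Fin 21 → Fin n) : Prop :=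
  Function.Injective t ∧ (∀ i : Fin 21, t i ≠ v₁ ∧ t i ≠ v₂ ∧ t i ≠ v₃) ∧
  TightPath E [t 0, t 1, t 2, t 3, t 4, t 5, t 6, t 7, t 8] ∧
  TightPath E [t 0, t 1, t 2, t 6, t 7, t 8] ∧
  TightPath E [t 9, t 10, v₁, t 11, t 12] ∧ TightPath E [t 9, t 10, t 3, t 11, t 12] ∧
  TightPath E [t 13, t 14, v₂, t 15, t 16] ∧ TightPath E [t 13, t 14, t 4, t 15, t 16] ∧
  TightPath E [t 17, t 18, v₃, t 19, t 20] ∧ TightPath E [t 17, t 18, t 5, t 19, t 20]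

open Classical in
noncomputable def absorberCount (E : Finset (Finset (Fin n))) (v₁ v₂ v₃ : Fin n) : ℕ :=
  (univ.filter (fun t : Fin 21 → Fin n => IsAbsorber E v₁ v₂ v₃ t)).card

/- `ψ` is a copy of `C₈(4)`, the 4-blow-up of the tight cycle on 8 vertices. -/
def IsC84Copy (E : Finset (Finset (Fin n))) (ψ : Fin 8 × Fin 4 → Fin n) : Prop :=
  Function.Injective ψ ∧ ∀ (i : Fin 8) (a b c : Fin 4),
    ({ψ (i, a), ψ (i + 1, b), ψ (i + 2, c)} : Finset (Fin n)) ∈ E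

open Classical in
noncomputable def c84Count (E : Finset (Finset (Fin n))) : ℕ :=
  (univ.filter (fun ψ : Fin 8 × Fin 4 → Fin n => IsC84Copy E ψ)).card

/- Number of copies of `F` in `H`: injective maps sending edges to edges. -/
open Classical in
noncomputable def copyCount {k m : ℕ} (F : Finset (Finset (Fin k)))
    (H : Finset (Finset (Fin m))) : ℕ :=
  (univ.filter (fun ψ : Fin k → Fin m =>
    Function.Injective ψ ∧ ∀ e ∈ F, e.image ψ ∈ H)).card

/- Number of copies of `K₄⁽³⁾⁻`, counted as ordered 4-tuples `(a,x,y,z)` of distinct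
vertices with apex `a`. -/
open Classical in
noncomputable def k4mCount (E : Finset (Finset (Fin n))) : ℕ :=
  (univ.filter (fun t : Fin n × Fin n × Fin n × Fin n =>
    ([t.1, t.2.1, t.2.2.1, t.2.2.2] : List (Fin n)).Nodup ∧
    ({t.1, t.2.1, t.2.2.1} : Finset (Fin n)) ∈ E ∧
    ({t.1, t.2.1, t.2.2.2} : Finset (Fin n)) ∈ E ∧
    ({t.1, t.2.2.1, t.2.2.2} : Finset (Fin n)) ∈ E)).card

/- Number of 5-tuples of distinct vertices `(p₁,p₂,x,p₁',p₂')` with `(p₁,p₂) ∈ P`,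
`(p₁',p₂') ∈ P'` and `p₁p₂x`, `p₂xp₁'`, `xp₁'p₂'` edges. -/
open Classical in
noncomputable def midConnCount (E : Finset (Finset (Fin n)))
    (P P' : Finset (Fin n × Fin n)) : ℕ :=
  (univ.filter (fun t : Fin n × Fin n × Fin n × Fin n × Fin n =>
    ([t.1, t.2.1, t.2.2.1, t.2.2.2.1, t.2.2.2.2] : List (Fin n)).Nodup ∧
    (t.1, t.2.1) ∈ P ∧ (t.2.2.2.1, t.2.2.2.2) ∈ P' ∧
    ({t.1, t.2.1, t.2.2.1} : Finset (Fin n)) ∈ E ∧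
    ({t.2.1, t.2.2.1, t.2.2.2.1} : Finset (Fin n)) ∈ E ∧
    ({t.2.2.1, t.2.2.2.1, t.2.2.2.2} : Finset (Fin n)) ∈ E)).card

-- ===== auxiliary development for statement_17 =====
section
open List
section CycListBasics
variable {V : Type*} [DecidableEq V] {G : SimpleGraph V}

/-- A cyclic list: length ≥ 3, nodup, consecutive adjacency incl. wraparound. -/
def CycList (G : SimpleGraph V) (l : List V) : Prop :=
  3 ≤ l.length ∧ l.Nodup ∧ ∃ a t, l = a :: t ∧ List.Chain G.Adj a (t ++ [a])

lemma chain'_cons_iff' {r : V → V → Prop} (a : V) (t : List V) :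
    List.Chain' r (a :: t) ↔ List.Chain r a t := Iff.rfl

lemma chain_snoc {r : V → V → Prop} (a x : V) (t : List V) :
    List.Chain r a (t ++ [x]) ↔
      List.Chain' r (a :: t) ∧ r ((a :: t).getLast (by simp)) x := by
  induction t generalizing a with
  | nil => simp [List.Chain, List.Chain']
  | cons b t ih =>
    simp only [List.Chain, List.Chain'] at ih ⊢
    rw [cons_append, isChain_cons_cons, ih b, isChain_cons_cons, List.getLast_cons_cons]
    tauto

lemma cycList_rotate_one {a : V} {t : List V} (h : CycList G (a :: t)) :
    CycList G (t ++ [a]) := by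
  obtain ⟨hlen, hnd, a', t', heq, hch⟩ := h
  injection heq with h1 h2
  subst h1; subst h2
  simp only [length_cons] at hlen
  obtain ⟨b, t, rfl⟩ : ∃ b t', t = b :: t' := by
    cases t with
    | nil => simp at hlen
    | cons b t' => exact ⟨b, t', rfl⟩
  have hperm : ((b :: t) ++ [a] : List V).Perm (a :: b :: t) := perm_append_comm
  have hch : G.Adj a b ∧ List.Chain G.Adj b (t ++ [a]) := List.isChain_cons_cons.mp hch
  refine ⟨by simpa using hlen, hperm.nodup_iff.mpr hnd, b, t ++ [a], by simp, ?_⟩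
  rw [chain_snoc] at hch ⊢
  have hla : ((b :: (t ++ [a])).getLast (by simp)) = a := by
    simp only [← cons_append, getLast_append]
    simp
  refine ⟨?_, by rw [hla]; exact hch.1⟩
  rw [chain'_cons_iff', chain_snoc]
  exact hch.2

lemma CycList.ne_nil {l : List V} (h : CycList G l) : l ≠ [] := by
  rcases h with ⟨hl, -⟩; cases l <;> simp_all

lemma cycList_rotate {l : List V} (h : CycList G l) (k : ℕ) :
    CycList G (l.rotate k) := by
  induction k generalizing l with
  | zero => simpa
  | succ k ih =>
    obtain ⟨a, t, rfl⟩ : ∃ a t, l = a :: t := by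
      cases l with
      | nil => exact absurd rfl h.ne_nil
      | cons a t => exact ⟨a, t, rfl⟩
    rw [rotate_cons_succ]
    exact ih (cycList_rotate_one h)

/-- Insertion of an outside vertex adjacent to head and last. -/
lemma cycList_insert {l : List V} {u : V} (hc : CycList G l) (hu : u ∉ l)
    (h0 : G.Adj u (l.getD 0 u)) (hl : G.Adj u (l.getLast hc.ne_nil)) :
    CycList G (u :: l) := by
  obtain ⟨hlen, hnd, a, t, rfl, hch⟩ := hc
  refine ⟨by simp at hlen ⊢; omega, by simp [hu, hnd], u, a :: t, rfl, ?_⟩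
  rw [chain_snoc] at hch ⊢
  have hgl : ((u :: a :: t).getLast (by simp)) = ((a :: t).getLast (by simp)) :=
    List.getLast_cons (by simp)
  refine ⟨?_, by rw [hgl]; exact hl.symm⟩
  rw [List.Chain', isChain_cons_cons]
  exact ⟨by simpa using h0, hch.1⟩

/-- The crossing surgery: from cycle w0 :: w1 :: m ++ y :: s :: r with u adjacent to
w0 and y, and w1 adjacent to s, we get a cycle one longer. -/
lemma cycList_surgery {u w0 w1 y s : V} {m r : List V}
    (hc : CycList G (w0 :: w1 :: m ++ y :: s :: r))
    (hu : u ∉ (w0 :: w1 :: m ++ y :: s :: r))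
    (h0 : G.Adj u w0) (hy : G.Adj u y) (hcross : G.Adj w1 s) :
    ∃ l, CycList G l ∧ l.length = (w0 :: w1 :: m ++ y :: s :: r).length + 1 := by
  classical
  obtain ⟨hlen, hnd, a, t, heq, hch⟩ := hc
  injection heq with h1 h2
  subst h1; subst h2
  refine ⟨u :: w0 :: ((s :: r).reverse ++ w1 :: (m ++ [y])), ⟨?_, ?_, u,
    w0 :: ((s :: r).reverse ++ w1 :: (m ++ [y])), rfl, ?_⟩, ?_⟩
  · simp; omega
  · -- Nodup via permutation to u :: old cycle
    have hperm : (w0 :: ((s :: r).reverse ++ w1 :: (m ++ [y]))).Perm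
        (w0 :: w1 :: m ++ y :: s :: r) := by
      refine List.Perm.cons w0 ?_
      calc ((s :: r).reverse ++ w1 :: (m ++ [y])).Perm
            ((s :: r) ++ w1 :: (m ++ [y])) := ((s :: r).reverse_perm).append_right _
        _ = _ := by rfl
        _ ~ (w1 :: (m ++ [y])) ++ (s :: r) := perm_append_comm
        _ = w1 :: m ++ y :: s :: r := by simp
    rw [List.nodup_cons]
    exact ⟨fun hmem => hu (by simpa using hperm.mem_iff.mp hmem),
      hperm.nodup_iff.mpr hnd⟩
  · -- the chain
    -- old chain pieces
    have hch : List.Chain G.Adj w0 ((w1 :: m ++ y :: s :: r) ++ [w0]) := hch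
    rw [show ((w1 :: m ++ y :: s :: r) ++ [w0]) = w1 :: (m ++ y :: (s :: (r ++ [w0]))) by simp] at hch
    unfold List.Chain at hch
    rw [chain_cons, isChain_cons_split] at hch
    obtain ⟨hw0w1, hw1my, hchY⟩ := hch
    rw [chain_cons] at hchY
    obtain ⟨hys, hchS⟩ := hchY
    -- goal
    unfold List.Chain
    rw [show ((w0 :: ((s :: r).reverse ++ w1 :: (m ++ [y]))) ++ [u])
        = w0 :: (((s :: r).reverse ++ (w1 :: ((m ++ [y]) ++ [u])))) by simp, chain_cons]
    refine ⟨h0, ?_⟩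
    rw [show ((s :: r).reverse ++ (w1 :: ((m ++ [y]) ++ [u])))
        = ((s :: r).reverse ++ w1 :: ((m ++ [y]) ++ [u])) by rfl, isChain_cons_split]
    constructor
    · -- Chain w0 ((s::r).reverse ++ [w1])
      rw [show ((s :: r).reverse ++ [w1]) = r.reverse ++ s :: [w1] by simp,
        isChain_cons_split]
      constructor
      · -- Chain w0 (r.reverse ++ [s]) i.e. reversed version of Chain s (r ++ [w0])
        have : List.Chain' G.Adj ((s :: (r ++ [w0])).reverse) := by
          unfold List.Chain'
          rw [isChain_reverse]
          have hflip : (fun a b => G.Adj b a) = G.Adj := by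
            ext x y; exact ⟨fun h => h.symm, fun h => h.symm⟩
          rw [hflip]
          exact hchS
        rw [show ((s :: (r ++ [w0])).reverse) = w0 :: (r.reverse ++ [s]) by simp] at this
        exact this
      · simpa using hcross.symm
    · rw [show ((m ++ [y]) ++ [u]) = m ++ y :: [u] by simp, isChain_cons_split]
      exact ⟨hw1my, by simpa using hy.symm⟩
  · simp; omega

end CycListBasics

section IndexLemmas
variable {V : Type*} [DecidableEq V] {G : SimpleGraph V}

lemma getD_drop_cons (l : List V) (x : V) {i : ℕ} (h : i < l.length) :
    l.drop i = l.getD i x :: l.drop (i + 1) := by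
  rw [List.drop_eq_getElem_cons h, List.getD_eq_getElem l x h]

lemma list_decomp (l : List V) (x : V) {j : ℕ} (hj2 : 2 ≤ j) (hjl : j + 2 ≤ l.length) :
    l = l.getD 0 x :: l.getD 1 x :: ((l.drop 2).take (j - 2)) ++
      l.getD j x :: l.getD (j + 1) x :: l.drop (j + 2) := by
  have e0 : l = l.getD 0 x :: l.drop 1 := by
    have := getD_drop_cons l x (show 0 < l.length by omega)
    simpa using this
  have e1 : l.drop 1 = l.getD 1 x :: l.drop 2 := getD_drop_cons l x (by omega)
  have e3 : (l.drop 2).drop (j - 2) = l.drop j := by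
    rw [List.drop_drop]; congr 1; omega
  have e2 : l.drop 2 = (l.drop 2).take (j - 2) ++ l.drop j := by
    rw [← e3, List.take_append_drop]
  have e4 : l.drop j = l.getD j x :: l.drop (j + 1) := getD_drop_cons l x (by omega)
  have e5 : l.drop (j + 1) = l.getD (j + 1) x :: l.drop (j + 2) := getD_drop_cons l x (by omega)
  conv_lhs => rw [e0, e1, e2, e4, e5]
  simp

lemma cycList_surgery_idx {d : List V} {u : V} {j : ℕ} (hc : CycList G d) (hu : u ∉ d)
    (hj2 : 2 ≤ j) (hjm : j + 2 ≤ d.length)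
    (h0 : G.Adj u (d.getD 0 u)) (hj : G.Adj u (d.getD j u))
    (hcross : G.Adj (d.getD 1 u) (d.getD (j + 1) u)) :
    ∃ l, CycList G l ∧ l.length = d.length + 1 := by
  have heq := list_decomp d u hj2 hjm
  rw [heq] at hc hu
  obtain ⟨l, hl, hlen⟩ := cycList_surgery hc hu h0 hj hcross
  exact ⟨l, hl, by rw [hlen, ← heq]⟩

/-- cyclic successor in a list -/
def nextVert (c : List V) (x : V) : V := c.getD ((c.idxOf x + 1) % c.length) x

lemma getD_default_irrel (l : List V) {i : ℕ} (h : i < l.length) (x y : V) :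
    l.getD i x = l.getD i y := by
  rw [List.getD_eq_get l x ⟨_, h⟩, List.getD_eq_get l y ⟨_, h⟩]

lemma getD_rotate (c : List V) (x : V) {i k : ℕ} (hk : k < c.length) :
    (c.rotate i).getD k x = c.getD ((k + i) % c.length) x := by
  have h1 : k < (c.rotate i).length := by rwa [List.length_rotate]
  have h2 : (k + i) % c.length < c.length := Nat.mod_lt _ (by omega)
  rw [List.getD_eq_get _ x ⟨_, h1⟩, List.getD_eq_get _ x ⟨_, h2⟩]
  exact List.get_rotate c i ⟨k, h1⟩

lemma indexOf_eq_of_get {c : List V} (hnd : c.Nodup) {i : ℕ} (hi : i < c.length)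
    {x : V} (hx : c.get ⟨i, hi⟩ = x) : c.idxOf x = i := by
  have hmem : x ∈ c := hx ▸ c.get_mem _
  have hlt : c.idxOf x < c.length := List.idxOf_lt_length_iff.mpr hmem
  have : c.get ⟨c.idxOf x, hlt⟩ = c.get ⟨i, hi⟩ := by rw [List.idxOf_get hlt, hx]
  have := (List.Nodup.get_inj_iff hnd).mp this
  simpa using this

lemma mod_succ_inj {m a b : ℕ} (ha : a < m) (hb : b < m)
    (h : (a + 1) % m = (b + 1) % m) : a = b := by
  rcases Nat.lt_or_ge (a + 1) m with h1 | h1 <;> rcases Nat.lt_or_ge (b + 1) m with h2 | h2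
  · rw [Nat.mod_eq_of_lt h1, Nat.mod_eq_of_lt h2] at h; omega
  · have hb1 : b + 1 = m := by omega
    rw [Nat.mod_eq_of_lt h1, hb1, Nat.mod_self] at h; omega
  · have ha1 : a + 1 = m := by omega
    rw [Nat.mod_eq_of_lt h2, ha1, Nat.mod_self] at h; omega
  · omega

lemma nextVert_mem {c : List V} {x : V} (hx : x ∈ c) : nextVert c x ∈ c := by
  have hlen : 0 < c.length := List.length_pos_iff.mpr (List.ne_nil_of_mem hx)
  have h : (c.idxOf x + 1) % c.length < c.length := Nat.mod_lt _ hlen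
  rw [nextVert, List.getD_eq_get c x ⟨_, h⟩]
  exact c.get_mem _

lemma nextVert_injOn {c : List V} (hnd : c.Nodup) {z z' : V} (hz : z ∈ c) (hz' : z' ∈ c)
    (h : nextVert c z = nextVert c z') : z = z' := by
  have hlen : 0 < c.length := List.length_pos_iff.mpr (List.ne_nil_of_mem hz)
  have hiz : c.idxOf z < c.length := List.idxOf_lt_length_iff.mpr hz
  have hiz' : c.idxOf z' < c.length := List.idxOf_lt_length_iff.mpr hz'
  have h1 : (c.idxOf z + 1) % c.length < c.length := Nat.mod_lt _ hlen
  have h2 : (c.idxOf z' + 1) % c.length < c.length := Nat.mod_lt _ hlen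
  rw [nextVert, nextVert, List.getD_eq_get c z ⟨_, h1⟩, List.getD_eq_get c z' ⟨_, h2⟩] at h
  have := (List.Nodup.get_inj_iff hnd).mp h
  have heq : c.idxOf z = c.idxOf z' := mod_succ_inj hiz hiz' (by simpa using this)
  rw [← List.idxOf_get hiz, ← List.idxOf_get hiz']
  congr 1
  exact Fin.ext heq

lemma nextVert_rotate {c : List V} (hnd : c.Nodup) {x : V} (hx : x ∈ c) (k : ℕ) :
    nextVert (c.rotate k) x = nextVert c x := by
  have hlen : 0 < c.length := List.length_pos_iff.mpr (List.ne_nil_of_mem hx)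
  set m := c.length with hm
  have hxr : x ∈ c.rotate k := (List.mem_rotate).mpr hx
  have hi' : (c.rotate k).idxOf x < (c.rotate k).length := List.idxOf_lt_length_iff.mpr hxr
  set i' := (c.rotate k).idxOf x with hi'def
  have hget : (c.rotate k).get ⟨i', hi'⟩ = x := List.idxOf_get hi'
  rw [List.get_rotate] at hget
  have hidx : c.idxOf x = (i' + k) % m := indexOf_eq_of_get hnd _ hget
  have hlr : (c.rotate k).length = m := List.length_rotate c k
  have hlt1 : (i' + 1) % m < m := Nat.mod_lt _ hlen
  rw [nextVert, nextVert, hidx, hlr, getD_rotate c x hlt1, Nat.mod_add_mod,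
    Nat.mod_add_mod]
  congr 2
  omega

end IndexLemmas

section KeyLemma
variable {V : Type*} [DecidableEq V] [Fintype V] {G : SimpleGraph V} [DecidableRel G.Adj]

lemma caseA {c : List V} {u z : V} (hc : CycList G c)
    (hmax : ∀ l, CycList G l → l.length ≤ c.length)
    (hu : u ∉ c) (hz : z ∈ c) (hu1 : G.Adj u z) (hu2 : G.Adj u (nextVert c z)) :
    False := by
  classical
  obtain ⟨hlen3, hnd, -⟩ := id hc
  set m := c.length with hm
  have hm0 : 0 < m := by omega
  have hiz : c.idxOf z < m := List.idxOf_lt_length_iff.mpr hz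
  set i := c.idxOf z with hidef
  have hmod : (i + 1) % m < m := Nat.mod_lt _ hm0
  set d := c.rotate ((i + 1) % m) with hd
  have hcd : CycList G d := cycList_rotate hc _
  have hud : u ∉ d := fun h => hu ((List.mem_rotate).mp h)
  have hdlen : d.length = m := List.length_rotate c _
  have h0 : d.getD 0 u = nextVert c z := by
    have e1 : d.getD 0 u = c.getD ((0 + (i + 1) % m) % m) u := getD_rotate c u (by omega)
    have e2 : (0 + (i + 1) % m) % m = (i + 1) % m := by
      rw [Nat.zero_add]; exact Nat.mod_eq_of_lt hmod
    rw [e1, e2, nextVert, ← hidef, ← hm]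
    exact getD_default_irrel c hmod u z
  have hlast : d.getLast hcd.ne_nil = z := by
    rw [List.getLast_eq_getElem, (List.getD_eq_getElem d u (n := d.length - 1) (by omega)).symm]
    have e1 : d.length - 1 = m - 1 := by omega
    rw [e1, hd, getD_rotate c u (by omega)]
    have e3 : (m - 1 + (i + 1) % m) % m = i := by
      calc (m - 1 + (i + 1) % m) % m = ((m - 1) % m + (i + 1) % m % m) % m :=
            Nat.add_mod _ _ _
        _ = ((m - 1) % m + (i + 1) % m) % m := by rw [Nat.mod_eq_of_lt hmod]
        _ = (m - 1 + (i + 1)) % m := (Nat.add_mod _ _ _).symm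
        _ = (m + i) % m := by congr 1; omega
        _ = i % m := Nat.add_mod_left m i
        _ = i := Nat.mod_eq_of_lt hiz
    rw [← hm, e3, List.getD_eq_get c u ⟨_, hiz⟩]
    exact List.idxOf_get hiz
  have := cycList_insert hcd hud (by rw [h0]; exact hu2) (by rw [hlast]; exact hu1)
  have hle := hmax _ this
  simp [hdlen] at hle

end KeyLemma

section KeyLemma2
variable {V : Type*} [DecidableEq V] [Fintype V] {G : SimpleGraph V} [DecidableRel G.Adj]

open Finset in
/-- key independence: for a longest cycle `c` and `u ∉ c`, the set
`{u} ∪ nextVert(N(u) ∩ c)` is independent and has size `deg_c(u) + 1`. -/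
lemma key_indep {c : List V} {u : V} (hc : CycList G c)
    (hmax : ∀ l, CycList G l → l.length ≤ c.length) (hu : u ∉ c) :
    ∃ T : Finset V, (∀ x ∈ T, ∀ y ∈ T, ¬ G.Adj x y) ∧
      T.card = (c.toFinset.filter (fun z => G.Adj u z)).card + 1 := by
  classical
  obtain ⟨hlen3, hnd, -⟩ := id hc
  set m := c.length with hm
  have hm0 : 0 < m := by omega
  set F := c.toFinset.filter (fun z => G.Adj u z) with hF
  refine ⟨insert u (F.image (nextVert c)), ?_, ?_⟩
  swap
  · rw [Finset.card_insert_of_notMem, Finset.card_image_of_injOn]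
    · intro z hz z' hz' h
      rw [hF, Finset.mem_coe, Finset.mem_filter, List.mem_toFinset] at hz hz'
      exact nextVert_injOn hnd hz.1 hz'.1 h
    · intro hmem
      obtain ⟨z, hz, hzu⟩ := Finset.mem_image.mp hmem
      rw [hF, Finset.mem_filter, List.mem_toFinset] at hz
      exact hu (hzu ▸ List.mem_toFinset.mp (List.mem_toFinset.mpr (nextVert_mem hz.1)))
  -- independence
  intro x hx y hy hadj
  simp only [Finset.mem_insert, Finset.mem_image] at hx hy
  -- helper facts
  have hFmem : ∀ z, z ∈ F → z ∈ c ∧ G.Adj u z := by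
    intro z hz; rw [hF, Finset.mem_filter, List.mem_toFinset] at hz; exact hz
  rcases hx with rfl | ⟨z, hzF, rfl⟩
  · rcases hy with rfl | ⟨z, hzF, rfl⟩
    · exact G.irrefl hadj
    · obtain ⟨hzc, hzadj⟩ := hFmem z hzF
      exact caseA hc hmax hu hzc hzadj hadj
  · obtain ⟨hzc, hzadj⟩ := hFmem z hzF
    rcases hy with rfl | ⟨z', hz'F, rfl⟩
    · exact caseA hc hmax hu hzc hzadj hadj.symm
    · obtain ⟨hz'c, hz'adj⟩ := hFmem z' hz'F
      -- both successors; reduce the cases where u sees a successor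
      by_cases hA : G.Adj u (nextVert c z)
      · exact caseA hc hmax hu hzc hzadj hA
      by_cases hA' : G.Adj u (nextVert c z')
      · exact caseA hc hmax hu hz'c hz'adj hA'
      by_cases hzz' : z = z'
      · exact G.irrefl (hzz' ▸ hadj)
      -- main surgery case
      have hiz : c.idxOf z < m := List.idxOf_lt_length_iff.mpr hzc
      set d := c.rotate (c.idxOf z) with hd
      have hcd : CycList G d := cycList_rotate hc _
      have hdnd : d.Nodup := (List.nodup_rotate).mpr hnd
      have hud : u ∉ d := fun h => hu ((List.mem_rotate).mp h)
      have hdlen : d.length = m := List.length_rotate c _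
      have hd0 : d.getD 0 u = z := by
        rw [hd, getD_rotate c u (by omega), Nat.zero_add, Nat.mod_eq_of_lt hiz,
          List.getD_eq_get c u ⟨_, hiz⟩]
        exact List.idxOf_get hiz
      have hz'd : z' ∈ d := (List.mem_rotate).mpr hz'c
      have hjlt : d.idxOf z' < m := hdlen ▸ List.idxOf_lt_length_iff.mpr hz'd
      set j := d.idxOf z' with hj
      have hdj : d.getD j u = z' := by
        rw [List.getD_eq_get d u ⟨j, by omega⟩]
        exact List.idxOf_get (by omega)
      have hj0 : j ≠ 0 := by
        intro h0
        apply hzz'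
        rw [← hd0, ← hdj, h0]
      -- d.idxOf z = 0
      have hdz0 : d.idxOf z = 0 := indexOf_eq_of_get hdnd (by omega)
        (by rw [← List.getD_eq_get d u ⟨0, by omega⟩]; exact hd0)
      have hnv : nextVert d z = d.getD 1 u := by
        rw [nextVert, hdz0, hdlen, Nat.zero_add, Nat.mod_eq_of_lt (by omega)]
        exact getD_default_irrel d (by omega) z u
      have hnv' : nextVert d z' = d.getD ((j + 1) % m) u := by
        rw [nextVert, ← hj, hdlen]
        exact getD_default_irrel d (by rw [hdlen]; exact Nat.mod_lt _ hm0) z' u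
      have hrotz : nextVert c z = d.getD 1 u := by
        rw [← hnv, hd, nextVert_rotate hnd hzc]
      have hrotz' : nextVert c z' = d.getD ((j + 1) % m) u := by
        rw [← hnv', hd, nextVert_rotate hnd hz'c]
      -- case j = m - 1 : nextVert c z' = z, contradicting hA'
      by_cases hjm1 : j = m - 1
      · apply hA'
        have : (j + 1) % m = 0 := by rw [hjm1]; simp [Nat.sub_add_cancel hm0]
        rw [hrotz', this, hd0]
        exact hzadj
      -- case j = 1 : nextVert c z = z', contradicting hA
      by_cases hj1 : j = 1
      · apply hA
        have h1 : d.getD 1 u = z' := by rw [← hj1]; exact hdj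
        rw [hrotz, h1]
        exact hz'adj
      -- main case : 2 ≤ j ≤ m - 2
      have hj2 : 2 ≤ j := by omega
      have hjm : j + 2 ≤ d.length := by omega
      have hcross : G.Adj (d.getD 1 u) (d.getD (j + 1) u) := by
        have e : (j + 1) % m = j + 1 := Nat.mod_eq_of_lt (by omega)
        have h2 : nextVert c z' = d.getD (j + 1) u := by rw [hrotz', e]
        rw [← hrotz, ← h2]
        exact hadj
      obtain ⟨l, hl, hlen⟩ := cycList_surgery_idx hcd hud hj2 hjm
        (by rw [hd0]; exact hzadj) (by rw [hdj]; exact hz'adj) hcross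
      have := hmax l hl
      omega

end KeyLemma2

section Extraction
variable {V : Type*} [DecidableEq V] [Fintype V] {G : SimpleGraph V} [DecidableRel G.Adj]

lemma exists_greatest {P : ℕ → Prop} {N : ℕ} (hP : ∃ k, P k) (hbd : ∀ k, P k → k ≤ N) :
    ∃ k, P k ∧ ∀ k', P k' → k' ≤ k := by
  classical
  obtain ⟨k0, hk0⟩ := hP
  exact ⟨Nat.findGreatest P N, Nat.findGreatest_spec (hbd k0 hk0) hk0,
    fun k' h => Nat.le_findGreatest (hbd k' h) h⟩

def PathList (G : SimpleGraph V) (l : List V) : Prop :=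
  l ≠ [] ∧ l.Nodup ∧ l.Chain' G.Adj

/-- From min degree `K ≥ 2` (ℕ version) we get a cycle of length `≥ K + 1`. -/
lemma exists_long_cycle [Nonempty V] {K : ℕ} (hK : 2 ≤ K)
    (hdeg : ∀ v : V, K ≤ G.degree v) :
    ∃ c, CycList G c ∧ K + 1 ≤ c.length := by
  classical
  -- longest path
  obtain ⟨L, ⟨p, hp, hpl⟩, hLmax⟩ :=
    exists_greatest (P := fun k => ∃ p, PathList G p ∧ p.length = k) (N := Fintype.card V)
      ⟨1, [Classical.arbitrary V], ⟨by simp, by simp, by simp [List.Chain']⟩, by simp⟩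
      (fun k ⟨p, hp, hpl⟩ => hpl ▸ hp.2.1.length_le_card)
  obtain ⟨hpne, hpnd, hpch⟩ := hp
  obtain ⟨a, t, rfl⟩ : ∃ a t, p = a :: t := by
    cases p with
    | nil => exact absurd rfl hpne
    | cons a t => exact ⟨a, t, rfl⟩
  have hext : ∀ w, G.Adj a w → w ∈ a :: t := by
    intro w hw
    by_contra hwmem
    have hnew : PathList G (w :: a :: t) := ⟨by simp, by simp [hwmem, hpnd],
      List.isChain_cons_cons.mpr ⟨hw.symm, hpch⟩⟩
    have := hLmax _ ⟨_, hnew, rfl⟩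
    simp [← hpl] at this
  set p := a :: t with hpdef
  set S := (G.neighborFinset a).image (fun w => p.idxOf w) with hS
  have hScard : K ≤ S.card := by
    rw [hS, Finset.card_image_of_injOn]
    · rw [G.card_neighborFinset_eq_degree]; exact hdeg a
    · intro w hw w' hw' h
      rw [Finset.mem_coe, SimpleGraph.mem_neighborFinset] at hw hw'
      exact (List.idxOf_inj (hext _ hw)).mp h
  have hSbound : ∀ jx ∈ S, 1 ≤ jx ∧ jx < p.length := by
    intro jx hjx
    rw [hS, Finset.mem_image] at hjx
    obtain ⟨w, hw, rfl⟩ := hjx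
    rw [SimpleGraph.mem_neighborFinset] at hw
    constructor
    · rw [hpdef, List.idxOf_cons_ne _ (hw.ne)]
      omega
    · exact List.idxOf_lt_length_iff.mpr (hext _ hw)
  have hSne : S.Nonempty := Finset.card_pos.mp (by omega)
  set j := S.max' hSne with hj
  have hjS : j ∈ S := S.max'_mem hSne
  have hjK : K ≤ j := by
    have hsub : S ⊆ Finset.Icc 1 j := fun x hx =>
      Finset.mem_Icc.mpr ⟨(hSbound x hx).1, S.le_max' x hx⟩
    have := Finset.card_le_card hsub
    rw [Nat.card_Icc] at this
    omega
  have hjlt : j < p.length := (hSbound j hjS).2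
  obtain ⟨w, hw, hwj⟩ := Finset.mem_image.mp (hS ▸ hjS)
  rw [SimpleGraph.mem_neighborFinset] at hw
  have hwmem : w ∈ p := hext _ hw
  have hgetw : p.get ⟨j, hjlt⟩ = w := by
    have h1 : p.get ⟨p.idxOf w, List.idxOf_lt_length_iff.mpr hwmem⟩ = w :=
      List.idxOf_get _
    simp only [hwj] at h1
    exact h1
  refine ⟨p.take (j + 1), ⟨?_, hpnd.sublist (List.take_sublist _ _), a, t.take j, ?_, ?_⟩, ?_⟩
  · rw [List.length_take]; omega
  · rw [hpdef]; rfl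
  · rw [chain_snoc]
    have e0 : (a :: t.take j : List V) = p.take (j + 1) := by
      rw [hpdef, List.take_succ_cons]
    constructor
    · have := List.IsChain.take hpch (j + 1)
      rwa [← e0] at this
    · simp only [e0]
      rw [List.getLast_eq_getElem]
      have hidx : (p.take (j + 1)).length - 1 = j := by
        rw [List.length_take]; omega
      simp only [hidx]
      rw [List.getElem_take, show p[j] = w from hgetw]
      exact hw.symm
  · rw [List.length_take]; omega

end Extraction

section WalkConv
variable {V : Type*} [DecidableEq V] [Fintype V] {G : SimpleGraph V}

/-- build a walk from a chain -/
def walkOfChain : (l : List V) → (a b : V) → List.Chain G.Adj a l →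
    (a :: l).getLast (by simp) = b → G.Walk a b
  | [], a, b, _, hb => (by simpa using hb : a = b) ▸ SimpleGraph.Walk.nil
  | x :: l', a, b, h, hb =>
    SimpleGraph.Walk.cons (List.chain_cons.mp h).1
      (walkOfChain l' x b (List.chain_cons.mp h).2 (by simpa using hb))

lemma walkOfChain_support : ∀ (l : List V) (a b : V) (h : List.Chain G.Adj a l)
    (hb : (a :: l).getLast (by simp) = b),
    (walkOfChain l a b h hb).support = a :: l
  | [], a, b, h, hb => by
    have : a = b := by simpa using hb
    subst this
    rfl
  | x :: l', a, b, h, hb => by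
    rw [walkOfChain, SimpleGraph.Walk.support_cons]
    exact congrArg _ (walkOfChain_support l' x b _ _)

lemma nodup_closed_walk_aux {a b : V} (w : G.Walk a b) (hnd : w.support.Nodup)
    (hlen : 2 ≤ w.length) : s(b, a) ∉ w.edges := by
  intro hmem
  cases w with
  | nil => simp at hlen
  | @cons _ x _ hadj w' =>
    rw [SimpleGraph.Walk.edges_cons, List.mem_cons] at hmem
    rw [SimpleGraph.Walk.support_cons, List.nodup_cons] at hnd
    rcases hmem with heq | hmem
    · rw [Sym2.eq_iff] at heq
      rcases heq with ⟨rfl, rfl⟩ | ⟨h1, -⟩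
      · exact hnd.1 w'.end_mem_support
      · -- b = x, so w' is a nodup walk from b to b, hence nil, so length = 1
        subst h1
        have : w' = SimpleGraph.Walk.nil.copy rfl rfl := by
          have hpath : w'.IsPath := SimpleGraph.Walk.IsPath.mk' hnd.2
          have := SimpleGraph.Path.loop_eq ⟨w', hpath⟩
          simpa [SimpleGraph.Path.nil] using congrArg Subtype.val this
        subst this
        simp at hlen
    · exact hnd.1 (SimpleGraph.Walk.snd_mem_support_of_mem_edges w' hmem)

lemma cycList_to_hamiltonian {c : List V} (hc : CycList G c)
    (hall : ∀ v : V, v ∈ c) : G.IsHamiltonian := by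
  classical
  obtain ⟨hlen, hnd, a, t, rfl, hch⟩ := hc
  rw [chain_snoc] at hch
  obtain ⟨hch', hlast⟩ := hch
  set b := (a :: t).getLast (by simp) with hb
  have hchain : List.Chain G.Adj a t := hch'
  let p : G.Walk a b := walkOfChain t a b hchain rfl
  have hsup : p.support = a :: t := walkOfChain_support t a b hchain rfl
  have hplen : p.length = t.length := by
    have := congrArg List.length hsup
    rw [SimpleGraph.Walk.length_support] at this
    simpa using this
  intro hcard
  refine ⟨b, SimpleGraph.Walk.cons hlast p, ?_⟩
  rw [SimpleGraph.Walk.isHamiltonianCycle_iff_isCycle_and_support_count_tail_eq_one]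
  constructor
  · rw [SimpleGraph.Walk.cons_isCycle_iff]
    refine ⟨SimpleGraph.Walk.IsPath.mk' (by rw [hsup]; exact hnd), ?_⟩
    apply nodup_closed_walk_aux p (by rw [hsup]; exact hnd)
    rw [hplen]
    simp at hlen
    omega
  · intro v
    rw [SimpleGraph.Walk.support_cons, List.tail_cons, hsup]
    exact List.count_eq_one_of_mem hnd (hall v)

end WalkConv

end

/- STATEMENT 17: uniformly dense graphs with linear minimum degree are Hamiltonian. -/
set_option maxHeartbeats 1000000 in
theorem statement_17 :
    ∀ α d : ℝ, 0 < α → 0 < d →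
      ∃ ρ : ℝ, 0 < ρ ∧ ∃ n₀ : ℕ, ∀ n : ℕ, n₀ ≤ n →
        ∀ (G : SimpleGraph (Fin n)) (_ : DecidableRel G.Adj),
          GraphDense G ρ d →
          (∀ v : Fin n, α * (n : ℝ) ≤ (G.degree v : ℝ)) →
          G.IsHamiltonian := by
  
  intro α d hα hd
  set α' := min α 1 with hα'def
  set d' := min d 1 with hd'def
  have hα'0 : 0 < α' := lt_min hα one_pos
  have hd'0 : 0 < d' := lt_min hd one_pos
  have hα'1 : α' ≤ 1 := min_le_right _ _
  have hd'1 : d' ≤ 1 := min_le_right _ _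
  have hα'le : α' ≤ α := min_le_left _ _
  have hd'le : d' ≤ d := min_le_left _ _
  set β := α' * d' / 8 with hβdef
  have hβ0 : 0 < β := by positivity
  refine ⟨d' * β ^ 2, by positivity, ⌈(8 : ℝ) / α'⌉₊ + 8, ?_⟩
  intro n hn G hdec hdense hmindeg
  have hN8 : (8 : ℝ) ≤ α' * n := by
    have h1 : ((8 : ℝ) / α') ≤ (⌈(8 : ℝ) / α'⌉₊ : ℝ) := Nat.le_ceil _
    have h2 : ((⌈(8 : ℝ) / α'⌉₊ : ℕ) : ℝ) ≤ (n : ℝ) := by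
      exact_mod_cast le_trans (by omega) hn
    have := le_trans h1 h2
    rw [div_le_iff₀ hα'0] at this
    linarith
  have hn0 : 0 < n := by omega
  haveI : Nonempty (Fin n) := ⟨⟨0, hn0⟩⟩
  -- min degree, ℕ version with our instances
  have hmd : ∀ v : Fin n, α' * n ≤ ((G.neighborFinset v).card : ℝ) := by
    intro v
    have h := hmindeg v
    rw [SimpleGraph.degree] at h
    nlinarith [mul_le_mul_of_nonneg_right hα'le (Nat.cast_nonneg n)]
  set K : ℕ := ⌈α' * n⌉₊ with hKdef
  have hKreal : α' * (n : ℝ) ≤ (K : ℝ) := Nat.le_ceil _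
  have hK2 : 2 ≤ K := by
    have : (2 : ℝ) ≤ (K : ℝ) := by linarith
    exact_mod_cast this
  have hdegK : ∀ v : Fin n, K ≤ G.degree v := by
    intro v
    rw [hKdef, Nat.ceil_le]
    have := hmd v
    rw [SimpleGraph.degree]
    linarith
  obtain ⟨c0, hc0, hc0len⟩ := exists_long_cycle hK2 hdegK
  obtain ⟨L, ⟨c, hc, hclen⟩, hLmax⟩ :=
    exists_greatest (P := fun k => ∃ c, CycList G c ∧ c.length = k) (N := n)
      ⟨c0.length, c0, hc0, rfl⟩
      (fun k ⟨cc, hcc, hl⟩ => by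
        have := hcc.2.1.length_le_card
        rw [Fintype.card_fin] at this
        omega)
  have hmax : ∀ l, CycList G l → l.length ≤ c.length :=
    fun l hl => hclen ▸ hLmax _ ⟨l, hl, rfl⟩
  by_cases hall : ∀ v : Fin n, v ∈ c
  · exact cycList_to_hamiltonian hc hall
  exfalso
  push_neg at hall
  obtain ⟨u0, hu0⟩ := hall
  set Cf := c.toFinset with hCf
  set U := (Finset.univ : Finset (Fin n)) \ Cf with hU
  have hmemU : ∀ u : Fin n, u ∈ U ↔ u ∉ c := by
    intro u
    rw [hU, Finset.mem_sdiff, hCf, List.mem_toFinset]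
    simp
  have hu0U : u0 ∈ U := (hmemU u0).mpr hu0
  -- independent set bound
  have hTbound : ∀ T : Finset (Fin n), (∀ x ∈ T, ∀ y ∈ T, ¬ G.Adj x y) →
      (T.card : ℝ) ≤ β * n := by
    intro T hT
    have hzero : (((T ×ˢ T).filter (fun p => G.Adj p.1 p.2)).card : ℝ) = 0 := by
      norm_cast
      rw [Finset.card_eq_zero, Finset.filter_eq_empty_iff]
      rintro ⟨x, y⟩ hxy
      rw [Finset.mem_product] at hxy
      exact hT x hxy.1 y hxy.2
    have hds := hdense T T
    rw [Finset.filter_congr_decidable] at hds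
    rw [hzero] at hds
    -- d * T² ≤ d' β² n²  with d ≥ d'
    have h1 : d' * (T.card : ℝ) ^ 2 ≤ d' * β ^ 2 * (n : ℝ) ^ 2 := by
      nlinarith [Nat.cast_nonneg (α := ℝ) T.card, Nat.cast_nonneg (α := ℝ) n]
    have h2 : ((T.card : ℝ)) ^ 2 ≤ (β * n) ^ 2 := by
      rw [mul_pow]
      nlinarith
    have hb : (0:ℝ) ≤ β * n := by positivity
    nlinarith [Nat.cast_nonneg (α := ℝ) T.card]
  -- per-vertex neighbor bound on the cycle
  have hNbd : ∀ u ∈ U, ((Cf.filter (fun z => G.Adj u z)).card : ℝ) ≤ β * n := by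
    intro u huU
    have hu : u ∉ c := (hmemU u).mp huU
    obtain ⟨T, hTind, hTcard⟩ := key_indep hc hmax hu
    have hb := hTbound T hTind
    rw [hTcard] at hb
    push_cast at hb
    linarith
  -- sum identity for e(U, Cf)
  have hsum : (((U ×ˢ Cf).filter (fun p => G.Adj p.1 p.2)).card : ℝ)
      = ∑ u ∈ U, ((Cf.filter (fun z => G.Adj u z)).card : ℝ) := by
    norm_cast
    rw [Finset.card_filter, Finset.sum_product]
    congr 1
    ext u
    rw [Finset.card_filter]
  -- upper bound on e(U, Cf)
  have hUpper : (((U ×ˢ Cf).filter (fun p => G.Adj p.1 p.2)).card : ℝ)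
      ≤ (U.card : ℝ) * (β * n) := by
    rw [hsum]
    calc ∑ u ∈ U, ((Cf.filter (fun z => G.Adj u z)).card : ℝ)
        ≤ ∑ _u ∈ U, β * (n : ℝ) := Finset.sum_le_sum hNbd
      _ = (U.card : ℝ) * (β * n) := by rw [Finset.sum_const, nsmul_eq_mul]
  -- density lower bound
  have hLow := hdense U Cf
  rw [Finset.filter_congr_decidable] at hLow
  -- |Cf| ≥ α' n
  have hCfcard : α' * (n : ℝ) ≤ (Cf.card : ℝ) := by
    rw [hCf, List.toFinset_card_of_nodup hc.2.1]
    have h1 : K + 1 ≤ c.length := le_trans hc0len (hmax c0 hc0)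
    have : (K : ℝ) ≤ (c.length : ℝ) := by exact_mod_cast le_trans (Nat.le_succ K) h1
    linarith
  -- |U| ≥ α' n - β n
  have hUcard : α' * (n : ℝ) - β * n ≤ (U.card : ℝ) := by
    have hsub : G.neighborFinset u0 \ Cf ⊆ U := by
      intro x hx
      rw [Finset.mem_sdiff] at hx
      rw [hU, Finset.mem_sdiff]
      exact ⟨Finset.mem_univ x, hx.2⟩
    have hcard1 : ((G.neighborFinset u0 \ Cf).card : ℝ) ≤ (U.card : ℝ) := by
      exact_mod_cast Finset.card_le_card hsub
    have hinter : G.neighborFinset u0 ∩ Cf = Cf.filter (fun z => G.Adj u0 z) := by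
      ext z
      rw [Finset.mem_inter, Finset.mem_filter, SimpleGraph.mem_neighborFinset]
      tauto
    have hsplit := Finset.card_sdiff_add_card_inter (G.neighborFinset u0) Cf
    have hN := hNbd u0 hu0U
    have hdeg := hmd u0
    rw [hinter] at hsplit
    have : ((G.neighborFinset u0).card : ℝ)
        = ((G.neighborFinset u0 \ Cf).card : ℝ)
          + ((Cf.filter (fun z => G.Adj u0 z)).card : ℝ) := by
      exact_mod_cast hsplit.symm
    linarith
  -- final arithmetic contradiction
  have hd'd : d' * (U.card : ℝ) * Cf.card ≤ d * U.card * Cf.card := by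
    have h0 : (0:ℝ) ≤ (U.card : ℝ) * Cf.card :=
      mul_nonneg (Nat.cast_nonneg _) (Nat.cast_nonneg _)
    have h2 := mul_le_mul_of_nonneg_right hd'le h0
    calc d' * (U.card : ℝ) * Cf.card = d' * ((U.card : ℝ) * Cf.card) := by ring
      _ ≤ d * ((U.card : ℝ) * Cf.card) := h2
      _ = d * (U.card : ℝ) * Cf.card := by ring
  have hAcard : (0:ℝ) ≤ (U.card : ℝ) := Nat.cast_nonneg _
  have hNn : (0:ℝ) < (n : ℝ) := by exact_mod_cast hn0
  -- β relations: d' * α' = 8 β,  so d' * α' * N - β N = 7 β N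
  have hkey1 : (U.card : ℝ) * (7 * β * n) ≤ d' * β ^ 2 * (n:ℝ) ^ 2 := by
    have e1 : d' * ((U.card : ℝ) * (α' * n)) ≤ d' * ((U.card : ℝ) * Cf.card) := by
      have := mul_le_mul_of_nonneg_left hCfcard hAcard
      nlinarith
    have e2 : d' * α' = 8 * β := by rw [hβdef]; ring
    nlinarith
  have hkey2 : 7 * (β * n) ≤ (U.card : ℝ) := by
    have h8 : (8:ℝ) * β ≤ α' := by
      rw [hβdef]
      have : α' * d' ≤ α' * 1 := mul_le_mul_of_nonneg_left hd'1 (le_of_lt hα'0)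
      linarith
    have : 8 * (β * n) - β * n ≤ α' * n - β * n :=
      by nlinarith
    linarith
  have hbn : (0:ℝ) < β * n := mul_pos hβ0 hNn
  have h7 : (0:ℝ) ≤ 7 * β * n := by nlinarith
  have hA7 : (7 * (β * n)) * (7 * β * n) ≤ (U.card : ℝ) * (7 * β * n) :=
    mul_le_mul_of_nonneg_right hkey2 h7
  have hd'b : d' * β ^ 2 * (n:ℝ) ^ 2 ≤ β ^ 2 * (n:ℝ) ^ 2 := by
    nlinarith [mul_pos hbn hbn]
  nlinarith [hA7, hkey1, hd'b, hbn, mul_pos hbn hbn]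
end

section
/- For every d, ξ > 0 there exist ρ, c > 0 and n₀ such that the following holds for every (ρ, d, ee)-dense 3-uniform hypergraph H=(V,E) on n ≥ n₀ vertices. For all sets P, P' ⊆ V×V of ordered pairs, each of size at least ξ·n², the number of 5-tuples of distinct vertices (p₁,p₂,x,p₁',p₂') with (p₁,p₂) ∈ P and (p₁',p₂') ∈ P' such that p₁p₂xp₁'p₂' is a tight path (i.e., p₁p₂x, p₂xp₁', and xp₁'p₂' are edges of H) is at least c·n⁵. -/
open Finset

variable {n : ℕ}

-- Auxiliary lemmas


open Classical in
lemma card_filter_prod_right {α β : Type*} (A : Finset α) (X : Finset β) (g : α × β → Prop) :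
    ((A ×ˢ X).filter (fun p => g p)).card
      = ∑ x ∈ X, (A.filter (fun a => g (a, x))).card := by
  rw [Finset.card_eq_sum_card_fiberwise (f := fun p : α × β => p.2) (t := X)
    (fun p hp => (Finset.mem_product.1 (Finset.mem_filter.1 hp).1).2)]
  refine Finset.sum_congr rfl fun x hx => ?_
  refine Finset.card_bij' (fun p _ => p.1) (fun a _ => (a, x)) ?_ ?_ ?_ ?_
  · rintro ⟨a, b⟩ hp
    simp only [Finset.mem_filter, Finset.mem_product] at hp ⊢
    obtain ⟨⟨⟨ha, hb⟩, hg⟩, hb2⟩ := hp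
    subst hb2
    exact ⟨ha, hg⟩
  · intro a ha
    simp only [Finset.mem_filter] at ha
    simp only [Finset.mem_filter, Finset.mem_product]
    refine ⟨⟨⟨ha.1, hx⟩, ha.2⟩, ?_⟩
    simp
  · rintro ⟨a, b⟩ hp
    simp only [Finset.mem_filter] at hp
    simp [hp.2]
  · intro a ha; rfl

open Classical in
lemma card_filter_prod_left {α β : Type*} (A : Finset α) (X : Finset β) (g : β × α → Prop) :
    ((X ×ˢ A).filter (fun p => g p)).card
      = ∑ x ∈ X, (A.filter (fun a => g (x, a))).card := by
  rw [Finset.card_eq_sum_card_fiberwise (f := fun p : β × α => p.1) (t := X)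
    (fun p hp => (Finset.mem_product.1 (Finset.mem_filter.1 hp).1).1)]
  refine Finset.sum_congr rfl fun x hx => ?_
  refine Finset.card_bij' (fun p _ => p.2) (fun a _ => (x, a)) ?_ ?_ ?_ ?_
  · rintro ⟨b, a⟩ hp
    simp only [Finset.mem_filter, Finset.mem_product] at hp ⊢
    obtain ⟨⟨⟨hb, ha⟩, hg⟩, hb2⟩ := hp
    subst hb2
    exact ⟨ha, hg⟩
  · intro a ha
    simp only [Finset.mem_filter] at ha
    simp only [Finset.mem_filter, Finset.mem_product]
    refine ⟨⟨⟨hx, ha.1⟩, ha.2⟩, ?_⟩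
    simp
  · rintro ⟨b, a⟩ hp
    simp only [Finset.mem_filter] at hp
    simp [hp.2]
  · intro a ha; rfl

open Classical in
lemma Kmid_card_right (P : Finset (Fin n × Fin n)) (X : Finset (Fin n)) :
    (Kmid P (univ ×ˢ X)).card = P.card * X.card := by
  rw [← Finset.card_product]
  refine Finset.card_bij' (fun pq _ => (pq.1, pq.2.2)) (fun pz _ => (pz.1, (pz.1.2, pz.2))) ?_ ?_ ?_ ?_
  · rintro ⟨p, q⟩ hpq
    simp only [Kmid, Finset.mem_filter, Finset.mem_product, Finset.mem_univ] at hpq ⊢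
    exact ⟨hpq.1.1, hpq.1.2.2⟩
  · rintro ⟨p, z⟩ hpz
    simp only [Kmid, Finset.mem_filter, Finset.mem_product, Finset.mem_univ] at hpz ⊢
    exact ⟨⟨hpz.1, trivial, hpz.2⟩, trivial⟩
  · rintro ⟨p, q⟩ hpq
    simp only [Kmid, Finset.mem_filter] at hpq
    simp [hpq.2]
  · rintro ⟨p, z⟩ _; rfl

open Classical in
lemma Kmid_card_left (P' : Finset (Fin n × Fin n)) (X : Finset (Fin n)) :
    (Kmid (X ×ˢ univ) P').card = X.card * P'.card := by
  rw [← Finset.card_product]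
  refine Finset.card_bij' (fun pq _ => (pq.1.1, pq.2)) (fun xp _ => ((xp.1, xp.2.1), xp.2)) ?_ ?_ ?_ ?_
  · rintro ⟨p, q⟩ hpq
    simp only [Kmid, Finset.mem_filter, Finset.mem_product, Finset.mem_univ] at hpq ⊢
    exact ⟨hpq.1.1.1, hpq.1.2⟩
  · rintro ⟨x, p⟩ hxp
    simp only [Kmid, Finset.mem_filter, Finset.mem_product, Finset.mem_univ] at hxp ⊢
    exact ⟨⟨⟨hxp.1, trivial⟩, hxp.2⟩, trivial⟩
  · rintro ⟨p, q⟩ hpq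
    simp only [Kmid, Finset.mem_filter] at hpq
    simp [← hpq.2]
  · rintro ⟨x, p⟩ _; rfl

open Classical in
lemma ePQ_right (E : Finset (Finset (Fin n))) (P : Finset (Fin n × Fin n)) (X : Finset (Fin n)) :
    ePQ E P (univ ×ˢ X)
      = ∑ x ∈ X, (P.filter (fun p => ({p.1, p.2, x} : Finset (Fin n)) ∈ E)).card := by
  have hbij : ePQ E P (univ ×ˢ X)
      = ((P ×ˢ X).filter (fun pz => ({pz.1.1, pz.1.2, pz.2} : Finset (Fin n)) ∈ E)).card := by
    unfold ePQ
    refine Finset.card_bij' (fun pq _ => (pq.1, pq.2.2)) (fun pz _ => (pz.1, (pz.1.2, pz.2))) ?_ ?_ ?_ ?_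
    · rintro ⟨p, q⟩ hpq
      simp only [Finset.mem_filter, Finset.mem_product, Finset.mem_univ] at hpq ⊢
      exact ⟨⟨hpq.1.1, hpq.1.2.2⟩, hpq.2.2⟩
    · rintro ⟨p, z⟩ hpz
      simp only [Finset.mem_filter, Finset.mem_product, Finset.mem_univ] at hpz ⊢
      exact ⟨⟨hpz.1.1, trivial, hpz.1.2⟩, trivial, hpz.2⟩
    · rintro ⟨p, q⟩ hpq
      simp only [Finset.mem_filter] at hpq
      simp [hpq.2.1]
    · rintro ⟨p, z⟩ _; rfl
  rw [hbij]
  have h2 := card_filter_prod_right P X (fun pz => ({pz.1.1, pz.1.2, pz.2} : Finset (Fin n)) ∈ E)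
  convert h2 using 2 <;> congr!

open Classical in
lemma ePQ_left (E : Finset (Finset (Fin n))) (P' : Finset (Fin n × Fin n)) (X : Finset (Fin n)) :
    ePQ E (X ×ˢ univ) P'
      = ∑ x ∈ X, (P'.filter (fun p => ({x, p.1, p.2} : Finset (Fin n)) ∈ E)).card := by
  have hbij : ePQ E (X ×ˢ univ) P'
      = ((X ×ˢ P').filter (fun xp => ({xp.1, xp.2.1, xp.2.2} : Finset (Fin n)) ∈ E)).card := by
    unfold ePQ
    refine Finset.card_bij' (fun pq _ => (pq.1.1, pq.2)) (fun xp _ => ((xp.1, xp.2.1), xp.2)) ?_ ?_ ?_ ?_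
    · rintro ⟨p, q⟩ hpq
      simp only [Finset.mem_filter, Finset.mem_product, Finset.mem_univ] at hpq ⊢
      refine ⟨⟨hpq.1.1.1, hpq.1.2⟩, ?_⟩
      rw [← hpq.2.1]
      exact hpq.2.2
    · rintro ⟨x, p⟩ hxp
      simp only [Finset.mem_filter, Finset.mem_product, Finset.mem_univ] at hxp ⊢
      exact ⟨⟨⟨hxp.1.1, trivial⟩, hxp.1.2⟩, trivial, hxp.2⟩
    · rintro ⟨p, q⟩ hpq
      simp only [Finset.mem_filter] at hpq
      simp [← hpq.2.1]
    · rintro ⟨x, p⟩ _; rfl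
  rw [hbij]
  have h2 := card_filter_prod_left P' X (fun xp => ({xp.1, xp.2.1, xp.2.2} : Finset (Fin n)) ∈ E)
  convert h2 using 2 <;> congr!

lemma trip_ne {α : Type*} [DecidableEq α] {a b c : α} (h : ({a,b,c} : Finset α).card = 3) :
    a ≠ b ∧ a ≠ c ∧ b ≠ c := by
  refine ⟨?_, ?_, ?_⟩ <;> intro heq
  · rw [heq] at h; simp only [Finset.insert_idem] at h
    have h2 : ({b,c} : Finset α).card ≤ 2 := (Finset.card_insert_le _ _).trans (by simp)
    omega
  · rw [heq] at h
    rw [show ({c,b,c} : Finset α) = {b,c} from by simp] at h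
    have h2 : ({b,c} : Finset α).card ≤ 2 := (Finset.card_insert_le _ _).trans (by simp)
    omega
  · rw [heq] at h
    rw [show ({a,c,c} : Finset α) = {a,c} from by simp] at h
    have h2 : ({a,c} : Finset α).card ≤ 2 := (Finset.card_insert_le _ _).trans (by simp)
    omega

open Classical in
noncomputable def dLset (E : Finset (Finset (Fin n))) (P : Finset (Fin n × Fin n))
    (q : Fin n × Fin n) : Finset (Fin n × Fin n) :=
  P.filter (fun p => p.2 = q.1 ∧ ({p.1, q.1, q.2} : Finset (Fin n)) ∈ E)

open Classical in
noncomputable def dRset (E : Finset (Finset (Fin n))) (P' : Finset (Fin n × Fin n))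
    (q : Fin n × Fin n) : Finset (Fin n × Fin n) :=
  P'.filter (fun p => p.1 = q.2 ∧ ({q.1, q.2, p.2} : Finset (Fin n)) ∈ E)

lemma dLset_card_le (E : Finset (Finset (Fin n))) (P : Finset (Fin n × Fin n))
    (q : Fin n × Fin n) : (dLset E P q).card ≤ n := by
  have : (dLset E P q).card ≤ (univ : Finset (Fin n)).card := by
    apply Finset.card_le_card_of_injOn (fun p => p.1) (fun p _ => mem_univ _)
    intro p hp p' hp' h
    simp only [dLset, Finset.mem_filter, Finset.mem_coe] at hp hp'
    exact Prod.ext h (hp.2.1.trans hp'.2.1.symm)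
  simpa using this

lemma dRset_card_le (E : Finset (Finset (Fin n))) (P' : Finset (Fin n × Fin n))
    (q : Fin n × Fin n) : (dRset E P' q).card ≤ n := by
  have : (dRset E P' q).card ≤ (univ : Finset (Fin n)).card := by
    apply Finset.card_le_card_of_injOn (fun p => p.2) (fun p _ => mem_univ _)
    intro p hp p' hp' h
    simp only [dRset, Finset.mem_filter, Finset.mem_coe] at hp hp'
    exact Prod.ext (hp.2.1.trans hp'.2.1.symm) h
  simpa using this

open Classical in
lemma Px_eq_sum (E : Finset (Finset (Fin n))) (P : Finset (Fin n × Fin n)) (x : Fin n) :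
    (P.filter (fun p => ({p.1, p.2, x} : Finset (Fin n)) ∈ E)).card
      = ∑ b : Fin n, (dLset E P (b, x)).card := by
  rw [Finset.card_eq_sum_card_fiberwise (f := fun p : Fin n × Fin n => p.2) (t := univ)
    (fun p _ => mem_univ _)]
  refine Finset.sum_congr rfl fun b _ => ?_
  congr 1
  ext p
  simp only [dLset, Finset.mem_filter]
  constructor
  · rintro ⟨⟨hp, he⟩, hb⟩
    exact ⟨hp, hb, hb ▸ he⟩
  · rintro ⟨hp, hb, he⟩
    exact ⟨⟨hp, by rw [hb]; exact he⟩, hb⟩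

open Classical in
lemma P'x_eq_sum (E : Finset (Finset (Fin n))) (P' : Finset (Fin n × Fin n)) (x : Fin n) :
    (P'.filter (fun p => ({x, p.1, p.2} : Finset (Fin n)) ∈ E)).card
      = ∑ b : Fin n, (dRset E P' (x, b)).card := by
  rw [Finset.card_eq_sum_card_fiberwise (f := fun p : Fin n × Fin n => p.1) (t := univ)
    (fun p _ => mem_univ _)]
  refine Finset.sum_congr rfl fun b _ => ?_
  congr 1
  ext p
  simp only [dRset, Finset.mem_filter]
  constructor
  · rintro ⟨⟨hp, he⟩, hb⟩
    exact ⟨hp, hb, hb ▸ he⟩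
  · rintro ⟨hp, hb, he⟩
    exact ⟨⟨hp, by rw [hb]; exact he⟩, hb⟩

open Classical in
lemma kmid_lb (B B' : Finset (Fin n × Fin n)) (Y : Finset (Fin n)) :
    ∑ x ∈ Y, (univ.filter (fun a => (a, x) ∈ B)).card
        * (univ.filter (fun b => (x, b) ∈ B')).card
      ≤ (Kmid B B').card := by
  have hc : ∑ x ∈ Y, (univ.filter (fun a => (a, x) ∈ B)).card
        * (univ.filter (fun b => (x, b) ∈ B')).card
      = (Y.sigma (fun x =>
          (univ.filter (fun a => (a, x) ∈ B)) ×ˢ (univ.filter (fun b => (x, b) ∈ B')))).card := by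
    rw [Finset.card_sigma]
    exact Finset.sum_congr rfl fun x _ => (Finset.card_product _ _).symm
  rw [hc]
  apply Finset.card_le_card_of_injOn (fun s => ((s.2.1, s.1), (s.1, s.2.2)))
  · rintro ⟨x, a, b⟩ hs
    simp only [Finset.mem_coe, Finset.mem_sigma, Finset.mem_product, Finset.mem_filter, Finset.mem_univ,
      true_and] at hs
    simp only [Finset.mem_coe, Kmid, Finset.mem_filter, Finset.mem_product]
    exact ⟨⟨hs.2.1, hs.2.2⟩, trivial⟩
  · rintro ⟨x, a, b⟩ _ ⟨x', a', b'⟩ _ h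
    simp only [Prod.ext_iff] at h
    obtain ⟨⟨ha, hx⟩, _, hb⟩ := h
    subst hx; subst ha; subst hb; rfl

open Classical in
lemma ePQ_eq_K0 (E : Finset (Finset (Fin n))) (B B' : Finset (Fin n × Fin n)) :
    ePQ E B B' = ((univ : Finset (Fin n × Fin n × Fin n)).filter
      (fun k => (k.1, k.2.1) ∈ B ∧ (k.2.1, k.2.2) ∈ B'
        ∧ ({k.1, k.2.1, k.2.2} : Finset (Fin n)) ∈ E)).card := by
  unfold ePQ
  refine Finset.card_bij' (fun pq _ => (pq.1.1, pq.1.2, pq.2.2))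
    (fun k _ => ((k.1, k.2.1), (k.2.1, k.2.2))) ?_ ?_ ?_ ?_
  · rintro ⟨⟨a, b⟩, ⟨c, d⟩⟩ h
    simp only [Finset.mem_filter, Finset.mem_product, Finset.mem_univ, true_and] at h ⊢
    obtain ⟨⟨h1, h2⟩, hbc, he⟩ := h
    cases hbc
    exact ⟨h1, h2, he⟩
  · rintro ⟨a, b, d⟩ h
    simp only [Finset.mem_filter, Finset.mem_product, Finset.mem_univ, true_and] at h ⊢
    exact ⟨⟨h.1, h.2.1⟩, h.2.2⟩
  · rintro ⟨⟨a, b⟩, ⟨c, d⟩⟩ h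
    simp only [Finset.mem_filter] at h
    obtain ⟨-, hbc, -⟩ := h
    cases hbc
    rfl
  · rintro ⟨a, b, d⟩ _; rfl

open Classical in
noncomputable def Tset (E : Finset (Finset (Fin n))) (P P' : Finset (Fin n × Fin n)) :
    Finset (Fin n × Fin n × Fin n × Fin n × Fin n) :=
  univ.filter (fun t =>
    (t.1, t.2.1) ∈ P ∧ (t.2.2.2.1, t.2.2.2.2) ∈ P' ∧
    ({t.1, t.2.1, t.2.2.1} : Finset (Fin n)) ∈ E ∧
    ({t.2.1, t.2.2.1, t.2.2.2.1} : Finset (Fin n)) ∈ E ∧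
    ({t.2.2.1, t.2.2.2.1, t.2.2.2.2} : Finset (Fin n)) ∈ E)

open Classical in
lemma T_lb (E : Finset (Finset (Fin n))) (P P' : Finset (Fin n × Fin n))
    (K : Finset (Fin n × Fin n × Fin n))
    (hK : ∀ k ∈ K, ({k.1, k.2.1, k.2.2} : Finset (Fin n)) ∈ E) :
    ∑ k ∈ K, (dLset E P (k.1, k.2.1)).card * (dRset E P' (k.2.1, k.2.2)).card
      ≤ (Tset E P P').card := by
  have hc : ∑ k ∈ K, (dLset E P (k.1, k.2.1)).card * (dRset E P' (k.2.1, k.2.2)).card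
      = (K.sigma (fun k => dLset E P (k.1, k.2.1) ×ˢ dRset E P' (k.2.1, k.2.2))).card := by
    rw [Finset.card_sigma]
    exact Finset.sum_congr rfl fun k _ => (Finset.card_product _ _).symm
  rw [hc]
  apply Finset.card_le_card_of_injOn
    (fun s => (s.2.1.1, s.1.1, s.1.2.1, s.1.2.2, s.2.2.2))
  · rintro ⟨⟨k1, k2, k3⟩, ⟨p, p'⟩⟩ hs
    simp only [Finset.mem_coe, Finset.mem_sigma, Finset.mem_product, dLset, dRset, Finset.mem_filter] at hs
    obtain ⟨hk, ⟨hpP, hp2, he1⟩, ⟨hp'P, hp'1, he3⟩⟩ := hs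
    simp only [Finset.mem_coe, Tset, Finset.mem_filter, Finset.mem_univ, true_and]
    refine ⟨?_, ?_, he1, hK _ hk, he3⟩
    · have : (p.1, k1) = p := Prod.ext rfl hp2.symm
      rw [this]; exact hpP
    · have : (k3, p'.2) = p' := Prod.ext hp'1.symm rfl
      rw [this]; exact hp'P
  · rintro ⟨⟨k1, k2, k3⟩, ⟨p, p'⟩⟩ hs ⟨⟨l1, l2, l3⟩, ⟨q, q'⟩⟩ ht h
    simp only [Finset.mem_coe, Finset.mem_sigma, Finset.mem_product, dLset, dRset,
      Finset.mem_filter] at hs ht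
    simp only [Prod.ext_iff] at h
    obtain ⟨hp1, hk1, hk2, hk3, hp'2⟩ := h
    subst hk1; subst hk2; subst hk3
    have hp : p = q := Prod.ext hp1 (hs.2.1.2.1.trans ht.2.1.2.1.symm)
    have hp' : p' = q' := Prod.ext (hs.2.2.2.1.trans ht.2.2.2.1.symm) hp'2
    rw [hp, hp']

open Classical in
lemma Tset_le (E : Finset (Finset (Fin n))) (P P' : Finset (Fin n × Fin n))
    (tu : ThreeUniform E) :
    (Tset E P P').card ≤ midConnCount E P P' + 3 * n ^ 4 := by
  set M : Finset (Fin n × Fin n × Fin n × Fin n × Fin n) := univ.filter (fun t : Fin n × Fin n × Fin n × Fin n × Fin n =>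
    ([t.1, t.2.1, t.2.2.1, t.2.2.2.1, t.2.2.2.2] : List (Fin n)).Nodup ∧
    (t.1, t.2.1) ∈ P ∧ (t.2.2.2.1, t.2.2.2.2) ∈ P' ∧
    ({t.1, t.2.1, t.2.2.1} : Finset (Fin n)) ∈ E ∧
    ({t.2.1, t.2.2.1, t.2.2.2.1} : Finset (Fin n)) ∈ E ∧
    ({t.2.2.1, t.2.2.2.1, t.2.2.2.2} : Finset (Fin n)) ∈ E) with hM
  set D1 : Finset (Fin n × Fin n × Fin n × Fin n × Fin n) := univ.filter (fun t => t.1 = t.2.2.2.1) with hD1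
  set D2 : Finset (Fin n × Fin n × Fin n × Fin n × Fin n) := univ.filter (fun t => t.1 = t.2.2.2.2) with hD2
  set D3 : Finset (Fin n × Fin n × Fin n × Fin n × Fin n) := univ.filter (fun t => t.2.1 = t.2.2.2.2) with hD3
  have hsub : Tset E P P' ⊆ M ∪ (D1 ∪ (D2 ∪ D3)) := by
    intro t ht
    simp only [Tset, Finset.mem_filter, Finset.mem_univ, true_and] at ht
    obtain ⟨hP, hP', he1, he2, he3⟩ := ht
    obtain ⟨h12, h13, h23⟩ := trip_ne (tu _ he1)
    obtain ⟨h24, h25, h45⟩ := trip_ne (tu _ he2)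
    obtain ⟨h35, h36, h56⟩ := trip_ne (tu _ he3)
    by_cases hnd : ([t.1, t.2.1, t.2.2.1, t.2.2.2.1, t.2.2.2.2] : List (Fin n)).Nodup
    · simp only [Finset.mem_union, hM, Finset.mem_filter, Finset.mem_univ, true_and]
      exact Or.inl ⟨hnd, hP, hP', he1, he2, he3⟩
    · have hkey : t.1 = t.2.2.2.1 ∨ t.1 = t.2.2.2.2 ∨ t.2.1 = t.2.2.2.2 := by
        by_contra hcon
        push_neg at hcon
        apply hnd
        simp only [List.nodup_cons, List.mem_cons, List.not_mem_nil, or_false,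
          List.nodup_nil, and_true]
        tauto
      simp only [Finset.mem_union, hD1, hD2, hD3, Finset.mem_filter, Finset.mem_univ, true_and]
      tauto
  have h1 : D1.card ≤ n ^ 4 := by
    have : D1.card ≤ (univ : Finset (Fin n × Fin n × Fin n × Fin n)).card := by
      apply Finset.card_le_card_of_injOn (fun t => (t.1, t.2.1, t.2.2.1, t.2.2.2.2))
        (fun t _ => mem_univ _)
      rintro ⟨a, b, c, d, e⟩ hs ⟨a', b', c', d', e'⟩ ht h
      simp only [hD1, Finset.coe_filter, Set.mem_setOf_eq] at hs ht
      simp only [Prod.mk.injEq] at h ⊢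
      refine ⟨h.1, h.2.1, h.2.2.1, ?_, h.2.2.2⟩
      rw [← hs.2, ← ht.2, h.1]
    refine le_trans this (le_of_eq ?_)
    simp only [Finset.card_univ, Fintype.card_prod, Fintype.card_fin]
    ring
  have h2 : D2.card ≤ n ^ 4 := by
    have : D2.card ≤ (univ : Finset (Fin n × Fin n × Fin n × Fin n)).card := by
      apply Finset.card_le_card_of_injOn (fun t => (t.1, t.2.1, t.2.2.1, t.2.2.2.1))
        (fun t _ => mem_univ _)
      rintro ⟨a, b, c, d, e⟩ hs ⟨a', b', c', d', e'⟩ ht h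
      simp only [hD2, Finset.coe_filter, Set.mem_setOf_eq] at hs ht
      simp only [Prod.mk.injEq] at h ⊢
      refine ⟨h.1, h.2.1, h.2.2.1, h.2.2.2, ?_⟩
      rw [← hs.2, ← ht.2, h.1]
    refine le_trans this (le_of_eq ?_)
    simp only [Finset.card_univ, Fintype.card_prod, Fintype.card_fin]
    ring
  have h3 : D3.card ≤ n ^ 4 := by
    have : D3.card ≤ (univ : Finset (Fin n × Fin n × Fin n × Fin n)).card := by
      apply Finset.card_le_card_of_injOn (fun t => (t.1, t.2.1, t.2.2.1, t.2.2.2.1))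
        (fun t _ => mem_univ _)
      rintro ⟨a, b, c, d, e⟩ hs ⟨a', b', c', d', e'⟩ ht h
      simp only [hD3, Finset.coe_filter, Set.mem_setOf_eq] at hs ht
      simp only [Prod.mk.injEq] at h ⊢
      refine ⟨h.1, h.2.1, h.2.2.1, h.2.2.2, ?_⟩
      rw [← hs.2, ← ht.2, h.2.1]
    refine le_trans this (le_of_eq ?_)
    simp only [Finset.card_univ, Fintype.card_prod, Fintype.card_fin]
    ring
  have hMc : M.card = midConnCount E P P' := rfl
  calc (Tset E P P').card ≤ (M ∪ (D1 ∪ (D2 ∪ D3))).card := Finset.card_le_card hsub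
    _ ≤ M.card + (D1 ∪ (D2 ∪ D3)).card := Finset.card_union_le _ _
    _ ≤ M.card + (D1.card + (D2.card + D3.card)) := by
        have := Finset.card_union_le D1 (D2 ∪ D3)
        have := Finset.card_union_le D2 D3
        omega
    _ ≤ midConnCount E P P' + 3 * n ^ 4 := by omega


/- STATEMENT 18: one-vertex connections between large pair sets in ee-dense
hypergraphs. -/
set_option maxHeartbeats 1000000 in
theorem statement_18 :
    ∀ d ξ : ℝ, 0 < d → 0 < ξ →
      ∃ ρ c : ℝ, 0 < ρ ∧ 0 < c ∧ ∃ n₀ : ℕ, ∀ n : ℕ, n₀ ≤ n →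
        ∀ E : Finset (Finset (Fin n)), ThreeUniform E → EeDense E ρ d →
          ∀ P P' : Finset (Fin n × Fin n),
            ξ * (n : ℝ) ^ 2 ≤ (P.card : ℝ) → ξ * (n : ℝ) ^ 2 ≤ (P'.card : ℝ) →
            c * (n : ℝ) ^ 5 ≤ (midConnCount E P P' : ℝ) := by
  intro d ξ hd hξ
  set ε := d * ξ / 2 with hεdef
  have hε : 0 < ε := by positivity
  refine ⟨min (ε / 8) (d * ε ^ 2 / 16), d * ε ^ 4 / 32,
    lt_min (by positivity) (by positivity), by positivity,
    ⌈(96 : ℝ) / (d * ε ^ 4)⌉₊ + 1, ?_⟩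
  intro n hn E tu hdense P P' hP hP'
  set ρ := min (ε / 8) (d * ε ^ 2 / 16) with hρdef
  have hρ1 : ρ ≤ ε / 8 := min_le_left _ _
  have hρ2 : ρ ≤ d * ε ^ 2 / 16 := min_le_right _ _
  have hn1 : 1 ≤ n := by omega
  have hnR : (0 : ℝ) < n := by exact_mod_cast Nat.pos_of_ne_zero (by omega)
  have hn96 : 96 / (d * ε ^ 4) ≤ (n : ℝ) := by
    calc (96 : ℝ) / (d * ε ^ 4) ≤ (⌈(96 : ℝ) / (d * ε ^ 4)⌉₊ : ℝ) := Nat.le_ceil _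
      _ ≤ n := by exact_mod_cast Nat.le_of_succ_le hn
  classical
  set B : Finset (Fin n × Fin n) :=
    univ.filter (fun q => ε * n ≤ ((dLset E P q).card : ℝ)) with hBdef
  set B' : Finset (Fin n × Fin n) :=
    univ.filter (fun q => ε * n ≤ ((dRset E P' q).card : ℝ)) with hB'def
  -- Claim A, left side
  have claimA : ∀ X : Finset (Fin n),
      ε * (n : ℝ) ^ 2 * X.card - ρ * (n : ℝ) ^ 3
        ≤ (n : ℝ) * ∑ x ∈ X, ((univ.filter (fun a => (a, x) ∈ B)).card : ℝ) := by
    intro X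
    have hdns := hdense P (univ ×ˢ X)
    rw [Kmid_card_right, ePQ_right] at hdns
    push_cast at hdns
    have hpt : ∀ x ∈ X,
        ((P.filter (fun p => ({p.1, p.2, x} : Finset (Fin n)) ∈ E)).card : ℝ)
          ≤ (n : ℝ) * ((univ.filter (fun a => (a, x) ∈ B)).card : ℝ) + ε * n * n := by
      intro x _
      rw [Px_eq_sum]
      push_cast
      have h0 : (0 : ℝ) ≤ ε * n := by positivity
      have step1 : (∑ b : Fin n, ((dLset E P (b, x)).card : ℝ))
          ≤ ∑ b : Fin n, (if (b, x) ∈ B then (n : ℝ) else ε * n) := by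
        apply Finset.sum_le_sum
        intro b _
        by_cases hb : (b, x) ∈ B
        · simp only [hb, if_true]
          exact_mod_cast dLset_card_le E P (b, x)
        · simp only [hb, if_false]
          have hnb : ¬ (ε * n ≤ ((dLset E P (b, x)).card : ℝ)) := by
            simpa [hBdef] using hb
          linarith [le_of_not_ge hnb]
      have step2 : ∑ b : Fin n, (if (b, x) ∈ B then (n : ℝ) else ε * n)
          = ((univ.filter (fun a => (a, x) ∈ B)).card : ℝ) * n
            + ((univ.filter (fun a => ¬ ((a, x) ∈ B))).card : ℝ) * (ε * n) := by
        rw [Finset.sum_ite, Finset.sum_const, Finset.sum_const, nsmul_eq_mul, nsmul_eq_mul]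
      have step3 : ((univ.filter (fun a => ¬ ((a, x) ∈ B))).card : ℝ) ≤ n := by
        have h1 := Finset.card_filter_le (univ : Finset (Fin n)) (fun a => ¬ ((a, x) ∈ B))
        have h2 : (univ : Finset (Fin n)).card = n := by simp
        exact_mod_cast le_trans h1 (le_of_eq h2)
      have step4 := mul_le_mul_of_nonneg_right step3 h0
      linarith [step1, step2, step4]
    have hs2 := Finset.sum_le_sum hpt
    rw [Finset.sum_add_distrib, ← Finset.mul_sum, Finset.sum_const, nsmul_eq_mul] at hs2
    have hPlb : 2 * ε * (n : ℝ) ^ 2 ≤ d * P.card := by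
      have h3 : d * (ξ * (n : ℝ) ^ 2) ≤ d * P.card := mul_le_mul_of_nonneg_left hP hd.le
      calc 2 * ε * (n : ℝ) ^ 2 = d * (ξ * (n : ℝ) ^ 2) := by rw [hεdef]; ring
        _ ≤ d * P.card := h3
    have hX0 : (0 : ℝ) ≤ X.card := by positivity
    linarith [hdns, hs2, mul_le_mul_of_nonneg_right hPlb hX0]
  -- Claim A, right side
  have claimA' : ∀ X : Finset (Fin n),
      ε * (n : ℝ) ^ 2 * X.card - ρ * (n : ℝ) ^ 3
        ≤ (n : ℝ) * ∑ x ∈ X, ((univ.filter (fun b => (x, b) ∈ B')).card : ℝ) := by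
    intro X
    have hdns := hdense (X ×ˢ univ) P'
    rw [Kmid_card_left, ePQ_left] at hdns
    push_cast at hdns
    have hpt : ∀ x ∈ X,
        ((P'.filter (fun p => ({x, p.1, p.2} : Finset (Fin n)) ∈ E)).card : ℝ)
          ≤ (n : ℝ) * ((univ.filter (fun b => (x, b) ∈ B')).card : ℝ) + ε * n * n := by
      intro x _
      rw [P'x_eq_sum]
      push_cast
      have h0 : (0 : ℝ) ≤ ε * n := by positivity
      have step1 : (∑ b : Fin n, ((dRset E P' (x, b)).card : ℝ))
          ≤ ∑ b : Fin n, (if (x, b) ∈ B' then (n : ℝ) else ε * n) := by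
        apply Finset.sum_le_sum
        intro b _
        by_cases hb : (x, b) ∈ B'
        · simp only [hb, if_true]
          exact_mod_cast dRset_card_le E P' (x, b)
        · simp only [hb, if_false]
          have hnb : ¬ (ε * n ≤ ((dRset E P' (x, b)).card : ℝ)) := by
            simpa [hB'def] using hb
          linarith [le_of_not_ge hnb]
      have step2 : ∑ b : Fin n, (if (x, b) ∈ B' then (n : ℝ) else ε * n)
          = ((univ.filter (fun b => (x, b) ∈ B')).card : ℝ) * n
            + ((univ.filter (fun b => ¬ ((x, b) ∈ B'))).card : ℝ) * (ε * n) := by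
        rw [Finset.sum_ite, Finset.sum_const, Finset.sum_const, nsmul_eq_mul, nsmul_eq_mul]
      have step3 : ((univ.filter (fun b => ¬ ((x, b) ∈ B'))).card : ℝ) ≤ n := by
        have h1 := Finset.card_filter_le (univ : Finset (Fin n)) (fun b => ¬ ((x, b) ∈ B'))
        have h2 : (univ : Finset (Fin n)).card = n := by simp
        exact_mod_cast le_trans h1 (le_of_eq h2)
      have step4 := mul_le_mul_of_nonneg_right step3 h0
      linarith [step1, step2, step4]
    have hs2 := Finset.sum_le_sum hpt
    rw [Finset.sum_add_distrib, ← Finset.mul_sum, Finset.sum_const, nsmul_eq_mul] at hs2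
    have hPlb : 2 * ε * (n : ℝ) ^ 2 ≤ d * P'.card := by
      have h3 : d * (ξ * (n : ℝ) ^ 2) ≤ d * P'.card := mul_le_mul_of_nonneg_left hP' hd.le
      calc 2 * ε * (n : ℝ) ^ 2 = d * (ξ * (n : ℝ) ^ 2) := by rw [hεdef]; ring
        _ ≤ d * P'.card := h3
    have hX0 : (0 : ℝ) ≤ X.card := by positivity
    linarith [hdns, hs2, mul_le_mul_of_nonneg_right hPlb hX0]
  -- thresholded vertex sets
  set X1 : Finset (Fin n) := univ.filter
    (fun x => ε / 2 * n ≤ ((univ.filter (fun a => (a, x) ∈ B)).card : ℝ)) with hX1def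
  set X2 : Finset (Fin n) := univ.filter
    (fun x => ε / 2 * n ≤ ((univ.filter (fun b => (x, b) ∈ B')).card : ℝ)) with hX2def
  have hX1c : ((univ \ X1).card : ℝ) ≤ (n : ℝ) / 4 := by
    have hA := claimA (univ \ X1)
    have hub : ∑ x ∈ univ \ X1, ((univ.filter (fun a => (a, x) ∈ B)).card : ℝ)
        ≤ ((univ \ X1).card : ℝ) * (ε / 2 * n) := by
      calc ∑ x ∈ univ \ X1, ((univ.filter (fun a => (a, x) ∈ B)).card : ℝ)
          ≤ ∑ _x ∈ univ \ X1, (ε / 2 * n) := by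
            apply Finset.sum_le_sum
            intro x hx
            have hxn : x ∉ X1 := (Finset.mem_sdiff.1 hx).2
            have h5 : ¬ (ε / 2 * n ≤ ((univ.filter (fun a => (a, x) ∈ B)).card : ℝ)) := by
              simpa [hX1def] using hxn
            linarith [le_of_not_ge h5]
        _ = ((univ \ X1).card : ℝ) * (ε / 2 * n) := by
            rw [Finset.sum_const, nsmul_eq_mul]
    have hρn := mul_le_mul_of_nonneg_right hρ1 (pow_nonneg hnR.le 3)
    have hubn := mul_le_mul_of_nonneg_left hub hnR.le
    have hpos : (0:ℝ) < ε / 2 * ((n:ℝ) * (n:ℝ)) := by positivity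
    have key : ε / 2 * ((n:ℝ) * (n:ℝ)) * (((univ \ X1).card : ℕ) : ℝ)
        ≤ ε / 2 * ((n:ℝ) * (n:ℝ)) * ((n:ℝ) / 4) := by linarith [hA, hubn, hρn]
    exact (mul_le_mul_iff_right₀ hpos).mp key
  have hX2c : ((univ \ X2).card : ℝ) ≤ (n : ℝ) / 4 := by
    have hA := claimA' (univ \ X2)
    have hub : ∑ x ∈ univ \ X2, ((univ.filter (fun b => (x, b) ∈ B')).card : ℝ)
        ≤ ((univ \ X2).card : ℝ) * (ε / 2 * n) := by
      calc ∑ x ∈ univ \ X2, ((univ.filter (fun b => (x, b) ∈ B')).card : ℝ)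
          ≤ ∑ _x ∈ univ \ X2, (ε / 2 * n) := by
            apply Finset.sum_le_sum
            intro x hx
            have hxn : x ∉ X2 := (Finset.mem_sdiff.1 hx).2
            have h5 : ¬ (ε / 2 * n ≤ ((univ.filter (fun b => (x, b) ∈ B')).card : ℝ)) := by
              simpa [hX2def] using hxn
            linarith [le_of_not_ge h5]
        _ = ((univ \ X2).card : ℝ) * (ε / 2 * n) := by
            rw [Finset.sum_const, nsmul_eq_mul]
    have hρn := mul_le_mul_of_nonneg_right hρ1 (pow_nonneg hnR.le 3)
    have hubn := mul_le_mul_of_nonneg_left hub hnR.le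
    have hpos : (0:ℝ) < ε / 2 * ((n:ℝ) * (n:ℝ)) := by positivity
    have key : ε / 2 * ((n:ℝ) * (n:ℝ)) * (((univ \ X2).card : ℕ) : ℝ)
        ≤ ε / 2 * ((n:ℝ) * (n:ℝ)) * ((n:ℝ) / 4) := by linarith [hA, hubn, hρn]
    exact (mul_le_mul_iff_right₀ hpos).mp key
  -- the intersection is large
  have hY : (n : ℝ) / 2 ≤ ((X1 ∩ X2).card : ℝ) := by
    have e1 : (univ \ X1).card = n - X1.card := by
      rw [Finset.card_sdiff_of_subset (Finset.subset_univ _)]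
      simp
    have e2 : (univ \ X2).card = n - X2.card := by
      rw [Finset.card_sdiff_of_subset (Finset.subset_univ _)]
      simp
    have le1 : X1.card ≤ n := by
      have h6 := Finset.card_le_univ X1
      simpa using h6
    have le2 : X2.card ≤ n := by
      have h6 := Finset.card_le_univ X2
      simpa using h6
    have c1 : ((univ \ X1).card : ℝ) = (n : ℝ) - X1.card := by
      rw [e1]; push_cast [le1]; ring
    have c2 : ((univ \ X2).card : ℝ) = (n : ℝ) - X2.card := by
      rw [e2]; push_cast [le2]; ring
    have hu : ((X1 ∪ X2).card : ℝ) ≤ (n : ℝ) := by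
      have h6 := Finset.card_le_univ (X1 ∪ X2)
      have h2 : (univ : Finset (Fin n)).card = n := by simp
      exact_mod_cast le_trans h6 (le_of_eq h2)
    have hie : ((X1 ∪ X2).card : ℝ) + ((X1 ∩ X2).card : ℝ)
        = (X1.card : ℝ) + (X2.card : ℝ) := by
      exact_mod_cast congrArg (Nat.cast : ℕ → ℝ) (Finset.card_union_add_card_inter X1 X2)
    linarith [hX1c, hX2c]
  -- Kmid lower bound
  have hq0 : (0 : ℝ) ≤ ε / 2 * n * (ε / 2 * n) := by positivity
  have hC : ε ^ 2 * (n : ℝ) ^ 3 / 8 ≤ ((Kmid B B').card : ℝ) := by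
    have h1 := kmid_lb B B' (X1 ∩ X2)
    have h1R : ((∑ x ∈ X1 ∩ X2, (univ.filter (fun a => (a, x) ∈ B)).card
          * (univ.filter (fun b => (x, b) ∈ B')).card : ℕ) : ℝ) ≤ ((Kmid B B').card : ℝ) := by
      exact_mod_cast h1
    push_cast at h1R
    have hterm : ∀ x ∈ X1 ∩ X2, ε / 2 * n * (ε / 2 * n)
        ≤ ((univ.filter (fun a => (a, x) ∈ B)).card : ℝ)
          * ((univ.filter (fun b => (x, b) ∈ B')).card : ℝ) := by
      intro x hx
      have hx1 : x ∈ X1 := (Finset.mem_inter.1 hx).1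
      have hx2 : x ∈ X2 := (Finset.mem_inter.1 hx).2
      have h7 : ε / 2 * n ≤ ((univ.filter (fun a => (a, x) ∈ B)).card : ℝ) := by
        simpa [hX1def] using hx1
      have h8 : ε / 2 * n ≤ ((univ.filter (fun b => (x, b) ∈ B')).card : ℝ) := by
        simpa [hX2def] using hx2
      exact mul_le_mul h7 h8 (by positivity) (Nat.cast_nonneg _)
    have hsum : ((X1 ∩ X2).card : ℝ) * (ε / 2 * n * (ε / 2 * n))
        ≤ ∑ x ∈ X1 ∩ X2, ((univ.filter (fun a => (a, x) ∈ B)).card : ℝ)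
            * ((univ.filter (fun b => (x, b) ∈ B')).card : ℝ) := by
      calc ((X1 ∩ X2).card : ℝ) * (ε / 2 * n * (ε / 2 * n))
          = ∑ _x ∈ X1 ∩ X2, (ε / 2 * n * (ε / 2 * n)) := by
            rw [Finset.sum_const, nsmul_eq_mul]
        _ ≤ _ := Finset.sum_le_sum hterm
    have h9 := mul_le_mul_of_nonneg_right hY hq0
    linarith [h1R, hsum, h9]
  -- ePQ lower bound via density
  have hePQ : d * ε ^ 2 * (n : ℝ) ^ 3 / 16 ≤ (ePQ E B B' : ℝ) := by
    have hD := hdense B B'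
    have h10 := mul_le_mul_of_nonneg_left hC hd.le
    have h11 := mul_le_mul_of_nonneg_right hρ2 (pow_nonneg hnR.le 3)
    linarith [hD, h10, h11]
  -- the triple set
  set K0 : Finset (Fin n × Fin n × Fin n) := (univ : Finset (Fin n × Fin n × Fin n)).filter
    (fun k => (k.1, k.2.1) ∈ B ∧ (k.2.1, k.2.2) ∈ B'
      ∧ ({k.1, k.2.1, k.2.2} : Finset (Fin n)) ∈ E) with hK0def
  have hK0 : ePQ E B B' = K0.card := ePQ_eq_K0 E B B'
  have hKedge : ∀ k ∈ K0, ({k.1, k.2.1, k.2.2} : Finset (Fin n)) ∈ E := by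
    intro k hk
    rw [hK0def, Finset.mem_filter] at hk
    exact hk.2.2.2
  have hTlb := T_lb E P P' K0 hKedge
  have hterm2 : ∀ k ∈ K0, ε * n * (ε * n)
      ≤ ((dLset E P (k.1, k.2.1)).card : ℝ) * ((dRset E P' (k.2.1, k.2.2)).card : ℝ) := by
    intro k hk
    rw [hK0def, Finset.mem_filter] at hk
    have hk1 : ε * n ≤ ((dLset E P (k.1, k.2.1)).card : ℝ) := by
      have := hk.2.1
      rw [hBdef, Finset.mem_filter] at this
      exact this.2
    have hk2 : ε * n ≤ ((dRset E P' (k.2.1, k.2.2)).card : ℝ) := by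
      have := hk.2.2.1
      rw [hB'def, Finset.mem_filter] at this
      exact this.2
    exact mul_le_mul hk1 hk2 (by positivity) (Nat.cast_nonneg _)
  have hTR : (K0.card : ℝ) * (ε * n * (ε * n)) ≤ ((Tset E P P').card : ℝ) := by
    have hTlbR : ((∑ k ∈ K0, (dLset E P (k.1, k.2.1)).card
          * (dRset E P' (k.2.1, k.2.2)).card : ℕ) : ℝ) ≤ ((Tset E P P').card : ℝ) := by
      exact_mod_cast hTlb
    push_cast at hTlbR
    have hsum2 : (K0.card : ℝ) * (ε * n * (ε * n))
        ≤ ∑ k ∈ K0, ((dLset E P (k.1, k.2.1)).card : ℝ)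
            * ((dRset E P' (k.2.1, k.2.2)).card : ℝ) := by
      calc (K0.card : ℝ) * (ε * n * (ε * n))
          = ∑ _k ∈ K0, (ε * n * (ε * n)) := by rw [Finset.sum_const, nsmul_eq_mul]
        _ ≤ _ := Finset.sum_le_sum hterm2
    linarith [hTlbR, hsum2]
  have hT5 : d * ε ^ 4 / 16 * (n : ℝ) ^ 5 ≤ ((Tset E P P').card : ℝ) := by
    have hq1 : (0 : ℝ) ≤ ε * n * (ε * n) := by positivity
    have hK0R : d * ε ^ 2 * (n : ℝ) ^ 3 / 16 ≤ (K0.card : ℝ) := by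
      rw [hK0] at hePQ
      exact hePQ
    have h12 := mul_le_mul_of_nonneg_right hK0R hq1
    have h13 : d * ε ^ 2 * (n : ℝ) ^ 3 / 16 * (ε * n * (ε * n))
        = d * ε ^ 4 / 16 * (n : ℝ) ^ 5 := by ring
    linarith [hTR, h12]
  -- conclude
  have hF : ((Tset E P P').card : ℝ) ≤ (midConnCount E P P' : ℝ) + 3 * (n : ℝ) ^ 4 := by
    have h14 := Tset_le E P P' tu
    exact_mod_cast h14
  have h96 : 96 ≤ d * ε ^ 4 * n := by
    rw [div_le_iff₀ (by positivity : (0:ℝ) < d * ε ^ 4)] at hn96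
    linarith [hn96]
  have h15 := mul_le_mul_of_nonneg_right h96 (pow_nonneg hnR.le 4)
  linarith [hT5, hF, h15]
end
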